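/- arXiv:1503.08995 — 2 statements merged into one kernel-verified Lean document; each statement's English description precedes it below -/
import Mathlib

section
/- For all positive integers n, m, r the following equalities of subsets of S_{n+m+r} hold: (1) {f∘(g×1_r) : f ∈ Sh^≻(n+m,r), g ∈ Sh(n,m)} = {f∘(1_n×g) : f ∈ Sh^≻(n,m+r), g ∈ Sh^≻(m,r)}; (2) {f∘(g×1_r) : f ∈ Sh^≺(n+m,r), g ∈ Sh^≻(n,m)} = {f∘(1_n×g) : f ∈ Sh^≻(n,m+r), g ∈ Sh^≺(m,r)}; (3) {f∘(g×1_r) : f ∈ Sh^≺(n+m,r), g ∈ Sh^≺(n,m)} = {f∘(1_n×g) : f ∈ Sh^≺(n,m+r), g ∈ Sh(m,r)}; where 1_k denotes the identity permutation of S_k. -/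
open scoped TensorProduct

namespace SurjPerm

/-- The maximal value of a word (the `r` such that a surjection lands in `{1,…,r}`). -/
def rk (l : List ℕ) : ℕ := l.foldr max 0

/-- `l` is (the list of values of) a surjective map `{1,…,n} → {1,…,r}`
    with `n = l.length ≥ 1` and `r = rk l`. -/
def IsST (l : List ℕ) : Prop := l ≠ [] ∧ ∀ k, k ∈ l ↔ 1 ≤ k ∧ k ≤ rk l

/-- membership in `ST_n^r`. -/
def memST (l : List ℕ) (n r : ℕ) : Prop := IsST l ∧ l.length = n ∧ rk l = r

/-- concatenation `x × y`. -/
def cat (x y : List ℕ) : List ℕ := x ++ y.map (· + rk x)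

/-- iterated concatenation `x¹ × x² × … × xᵖ`. -/
def catAll (l : List (List ℕ)) : List ℕ := l.foldr cat []

/-- standardization of a word. -/
def stdList (l : List ℕ) : List ℕ := l.map fun v => (l.dedup.filter (· ≤ v)).length

/-- corestriction `x|^K`. -/
def corestrict (x : List ℕ) (K : Finset ℕ) : List ℕ := stdList (x.filter (· ∈ K))

/-- the `i`-th entry of a word, `1`-indexed: `ent f i = f(i)`. -/
def ent (l : List ℕ) (i : ℕ) : ℕ := l.getD (i - 1) 0

/-- composition `f ∘ x` of the map (word) `f` with the map (word) `x`. -/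
def wcomp (f x : List ℕ) : List ℕ := x.map fun v => ent f v

/-- the identity permutation `1_n` as a word. -/
def idW (n : ℕ) : List ℕ := (List.range n).map (· + 1)

/-- the permutation `ε(r₁,…,r_p)` as a word: the `i`-th block of positions
    carries the values shifted above all later blocks. -/
def epsW : List ℕ → List ℕ
  | [] => []
  | r :: rs => ((List.range r).map (· + rs.sum + 1)) ++ epsW rs

/-- `x \ y := ε(r,s) ∘ (x × y)`. -/
def bsl (x y : List ℕ) : List ℕ := wcomp (epsW [rk x, rk y]) (cat x y)

/-- `f` is strictly increasing on each block of the composition `ns`. -/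
def blockIncr (ns f : List ℕ) : Prop :=
  ∀ k, k < ns.length → ∀ i j, (ns.take k).sum < i → i < j → j ≤ (ns.take (k + 1)).sum →
    ent f i < ent f j

/-- `(n₁,…,n_p)`-stuffles. -/
def IsStuffle (ns f : List ℕ) : Prop := IsST f ∧ f.length = ns.sum ∧ blockIncr ns f

/-- `(n₁,…,n_p)`-shuffles: stuffles which are permutations. -/
def IsShuffle (ns f : List ℕ) : Prop := IsStuffle ns f ∧ rk f = ns.sum

/-- irreducible surjections. -/
def Irr (l : List ℕ) : Prop := IsST l ∧ ¬ ∃ g h, IsST g ∧ IsST h ∧ l = cat g h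

/-- the set of irreducible surjections of arity `n`. -/
def IrrN (n : ℕ) : Set (List ℕ) := {l | Irr l ∧ l.length = n}

/-- the product `x · y` on surjections. -/
def dotW (x y : List ℕ) : List ℕ :=
  x.map (fun v => if v < rk x then v else rk x + rk y - 1) ++
    y.map (fun v => if v < rk y then v + rk x - 1 else rk x + rk y - 1)

/-- iterated `·` product `x¹ · x² · … · xᵖ`. -/
def dotAll : List (List ℕ) → List ℕ
  | [] => []
  | a :: as => as.foldl dotW a

/-- indecomposable surjections (for the `·` product). -/
def Indec (l : List ℕ) : Prop := IsST l ∧ ¬ ∃ a b, IsST a ∧ IsST b ∧ l = dotW a b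

/-- the set `𝒟`. -/
def inD (x : List ℕ) : Prop :=
  IsST x ∧ ((x = [1] ∨ x = [1, 1]) ∨
    (3 ≤ x.length ∧ Irr x ∧
      ¬ ∃ y z, ∃ _ : y.length < x.length, inD y ∧ IsST z ∧ x = bsl y z))
termination_by x.length
decreasing_by assumption

/-- the set `𝒞`. -/
def inC (x : List ℕ) : Prop :=
  Irr x ∧
    ((∃ y z, ∃ _ : y.length < x.length, Irr y ∧ ¬ inC y ∧ IsST z ∧ x = bsl y z) ∨
      (∃ a b, IsST a ∧ IsST b ∧ x = dotW a b))
termination_by x.length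
decreasing_by assumption

/-- the set `𝔅(l)`, with `𝔅(0) = 𝒟`. -/
def inBfrak (l : ℕ) (x : List ℕ) : Prop :=
  if l = 0 then inD x else ∃ u v, inD u ∧ IsST v ∧ v.length = l ∧ x = bsl u v

/-- `t_i ∘ f`: exchange the values `i` and `i+1`. -/
def swapVal (i : ℕ) (l : List ℕ) : List ℕ :=
  l.map fun v => if v = i then i + 1 else if v = i + 1 then i else v

/-- covering relation of the weak Bruhat order on `ST_n^r`:
    `f < t_i ∘ f` whenever `f⁻¹(i) < f⁻¹(i+1)`. -/
def wBCov (f g : List ℕ) : Prop :=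
  ∃ i, 1 ≤ i ∧ i + 1 ≤ rk f ∧ g = swapVal i f ∧
    ∀ a b, a < f.length → b < f.length → f.getD a 0 = i → f.getD b 0 = i + 1 → a < b

/-- strict weak Bruhat order. -/
def wBlt : List ℕ → List ℕ → Prop := Relation.TransGen wBCov

/-- weak Bruhat order. -/
def wBle : List ℕ → List ℕ → Prop := Relation.ReflTransGen wBCov

/-- the (0-indexed) positions `j₁-1 < … < j_λ-1` where the maximal value is attained. -/
def maxPos (x : List ℕ) : List ℕ :=
  (List.range x.length).filter fun i => x.getD i 0 = rk x

/-- `λ(x)`. -/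
def lam (x : List ℕ) : ℕ := (maxPos x).length

/-- `𝕄(x) = (𝕄(x)_λ, …, 𝕄(x)₁)`. -/
def Mword (x : List ℕ) : List ℕ :=
  (List.zipWith (fun a b => b - a - 1) (maxPos x) ((maxPos x).drop 1) ++
    [x.length - (maxPos x).getLastD 0 - 1]).reverse

/-- the pieces `x|^{1..l₁}, x|^{l₁+1..l₂}, …, x|^{l_p+1..r}`. -/
def pieces (x : List ℕ) (ls : List ℕ) : List (List ℕ) :=
  ((0 :: ls).zip (ls ++ [rk x])).map fun p => corestrict x (Finset.Icc (p.1 + 1) p.2)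

/-- `x^{(l₁,…,l_p)}`. -/
def xfam (x : List ℕ) (ls : List ℕ) : List ℕ := catAll (pieces x ls)

variable (𝕂 : Type) [Field 𝕂]

/-- the vector space `𝕂[ST]` (with basis all words; only the basis elements in `ST` matter). -/
abbrev V := List ℕ →₀ 𝕂

/-- the coproduct `Δ`. -/
noncomputable def Delta : V 𝕂 →ₗ[𝕂] TensorProduct 𝕂 (V 𝕂) (V 𝕂) :=
  Finsupp.lsum 𝕂 fun x => LinearMap.toSpanSingleton 𝕂 _
    (∑ i ∈ Finset.Ico 1 (rk x),
      Finsupp.single (corestrict x (Finset.Icc 1 i)) (1 : 𝕂) ⊗ₜ[𝕂]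
        Finsupp.single (corestrict x (Finset.Icc (i + 1) (rk x))) (1 : 𝕂))

/-- the subspace `𝕂[ST_n]`. -/
noncomputable def STspanN (n : ℕ) : Submodule 𝕂 (V 𝕂) :=
  Submodule.span 𝕂 {v | ∃ l, IsST l ∧ l.length = n ∧ v = Finsupp.single l 1}

/-- `Prim(ST)_n = {v ∈ 𝕂[ST_n] : Δ v = 0}`. -/
noncomputable def PrimN (n : ℕ) : Submodule 𝕂 (V 𝕂) :=
  STspanN 𝕂 n ⊓ LinearMap.ker (Delta 𝕂)

/-- the projection `E`. -/
noncomputable def Emap : V 𝕂 →ₗ[𝕂] V 𝕂 :=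
  Finsupp.lsum 𝕂 fun x => LinearMap.toSpanSingleton 𝕂 _
    (∑ᶠ ls ∈ {ls : List ℕ | ls.Chain' (· < ·) ∧ ∀ l ∈ ls, 0 < l ∧ l < rk x},
      ((-1 : 𝕂) ^ ls.length) • Finsupp.single (xfam x ls) (1 : 𝕂))

/-- generic bilinear-on-basis operation indexed by a set of shuffles. -/
noncomputable def shOp (P : ℕ → ℕ → List ℕ → Prop) (a b : V 𝕂) : V 𝕂 :=
  Finsupp.sum a fun x cx => Finsupp.sum b fun y cy =>
    (cx * cy) • ∑ᶠ f ∈ {f : List ℕ | IsShuffle [rk x, rk y] f ∧ P (rk x) (rk y) f},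
      Finsupp.single (wcomp f (cat x y)) (1 : 𝕂)

/-- the dendriform operation `≻`. -/
noncomputable def succOp : V 𝕂 → V 𝕂 → V 𝕂 :=
  shOp 𝕂 fun r s f => ent f r < ent f (r + s)

/-- the dendriform operation `≺`. -/
noncomputable def precOp : V 𝕂 → V 𝕂 → V 𝕂 :=
  shOp 𝕂 fun r s f => ent f (r + s) < ent f r

/-- `ω^≺(y₁,…,y_k) = y₁ ≺ (y₂ ≺ (… ≺ y_k))`. -/
noncomputable def omPrec : List (V 𝕂) → V 𝕂
  | [] => 0
  | [a] => a
  | a :: as => precOp 𝕂 a (omPrec as)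

/-- `ω^≻(y₁,…,y_k) = ((y₁ ≻ y₂) ≻ …) ≻ y_k`. -/
noncomputable def omSucc : List (V 𝕂) → V 𝕂
  | [] => 0
  | a :: as => as.foldl (succOp 𝕂) a

/-- `ω^≺(l) ≻ x ≺ ω^≻(r)`, empty factors omitted. -/
noncomputable def mterm (x : V 𝕂) : List (V 𝕂) → List (V 𝕂) → V 𝕂
  | [], [] => x
  | [], r => precOp 𝕂 x (omSucc 𝕂 r)
  | l, [] => succOp 𝕂 (omPrec 𝕂 l) x
  | l, r => precOp 𝕂 (succOp 𝕂 (omPrec 𝕂 l) x) (omSucc 𝕂 r)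

/-- the brace operation `M^{ST}_{1k}(x; y₁,…,y_k)`. -/
noncomputable def braceM (x : V 𝕂) (ys : List (V 𝕂)) : V 𝕂 :=
  ∑ j ∈ Finset.range (ys.length + 1),
    ((-1 : 𝕂) ^ (ys.length - j)) • mterm 𝕂 x (ys.take j) (ys.drop j)

/-- generic bilinear-on-basis operation indexed by a set of stuffles, with `q`-weights
    `q^{s(f) - c}` where `s(f) = |f| - rk f`. -/
noncomputable def stOp (q : 𝕂) (c : ℕ) (P : ℕ → ℕ → List ℕ → Prop) (a b : V 𝕂) : V 𝕂 :=
  Finsupp.sum a fun x cx => Finsupp.sum b fun y cy =>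
    (cx * cy) • ∑ᶠ f ∈ {f : List ℕ | IsStuffle [rk x, rk y] f ∧ P (rk x) (rk y) f},
      q ^ (f.length - rk f - c) • Finsupp.single (wcomp f (cat x y)) (1 : 𝕂)

/-- `≻_q`. -/
noncomputable def succQ (q : 𝕂) : V 𝕂 → V 𝕂 → V 𝕂 :=
  stOp 𝕂 q 0 fun r s f => ent f r < ent f (r + s)

/-- `≺_q`. -/
noncomputable def precQ (q : 𝕂) : V 𝕂 → V 𝕂 → V 𝕂 :=
  stOp 𝕂 q 0 fun r s f => ent f (r + s) < ent f r

/-- `·_q`. -/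
noncomputable def dotQ (q : 𝕂) : V 𝕂 → V 𝕂 → V 𝕂 :=
  stOp 𝕂 q 1 fun r s f => ent f r = ent f (r + s)

/-- `≽_q = ≻_q + q ·_q`. -/
noncomputable def succcQ (q : 𝕂) (a b : V 𝕂) : V 𝕂 := succQ 𝕂 q a b + q • dotQ 𝕂 q a b

/-- `ω^{≺_q}`. -/
noncomputable def omPrecQ (q : 𝕂) : List (V 𝕂) → V 𝕂
  | [] => 0
  | [a] => a
  | a :: as => precQ 𝕂 q a (omPrecQ q as)

/-- `ω^{≽_q}`. -/
noncomputable def omSucccQ (q : 𝕂) : List (V 𝕂) → V 𝕂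
  | [] => 0
  | a :: as => as.foldl (succcQ 𝕂 q) a

/-- `ω^{≺_q}(l) ≽_q x ≺_q ω^{≽_q}(r)`, empty factors omitted. -/
noncomputable def mtermQ (q : 𝕂) (x : V 𝕂) : List (V 𝕂) → List (V 𝕂) → V 𝕂
  | [], [] => x
  | [], r => precQ 𝕂 q x (omSucccQ 𝕂 q r)
  | l, [] => succcQ 𝕂 q (omPrecQ 𝕂 q l) x
  | l, r => precQ 𝕂 q (succcQ 𝕂 q (omPrecQ 𝕂 q l) x) (omSucccQ 𝕂 q r)

/-- the brace operation `M^{ST(q)}_{1k}`. -/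
noncomputable def braceMQ (q : 𝕂) (x : V 𝕂) (ys : List (V 𝕂)) : V 𝕂 :=
  ∑ j ∈ Finset.range (ys.length + 1),
    ((-1 : 𝕂) ^ (ys.length - j)) • mtermQ 𝕂 q x (ys.take j) (ys.drop j)

/-- the shuffle product of two basis elements. -/
noncomputable def shufSingle (x y : List ℕ) : V 𝕂 :=
  ∑ᶠ f ∈ {f : List ℕ | IsShuffle [rk x, rk y] f},
    Finsupp.single (wcomp f (cat x y)) (1 : 𝕂)

/-- the shuffle product `*` on `𝕂[ST]`, as a bilinear map. -/
noncomputable def shufL : V 𝕂 →ₗ[𝕂] V 𝕂 →ₗ[𝕂] V 𝕂 :=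
  Finsupp.lsum 𝕂 fun x => LinearMap.toSpanSingleton 𝕂 _
    (Finsupp.lsum 𝕂 fun y => LinearMap.toSpanSingleton 𝕂 _ (shufSingle 𝕂 x y))

/-- the augmented space `𝕂·1 ⊕ 𝕂[ST]`. -/
abbrev Vp := 𝕂 × V 𝕂

/-- inclusion `𝕂[ST] ↪ 𝕂·1 ⊕ 𝕂[ST]`. -/
noncomputable def inclV : V 𝕂 →ₗ[𝕂] Vp 𝕂 := LinearMap.inr 𝕂 𝕂 (V 𝕂)

/-- the unit `1`. -/
noncomputable def oneVp : Vp 𝕂 := (1, 0)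

/-- the unital extension of the shuffle product to `𝕂·1 ⊕ 𝕂[ST]`, as a bilinear map:
    `(a + x)(b + y) = ab + (a y + b x + x * y)`.  In particular `1 * u = u = u * 1`. -/
noncomputable def mulVp : Vp 𝕂 →ₗ[𝕂] Vp 𝕂 →ₗ[𝕂] Vp 𝕂 :=
  LinearMap.mk₂ 𝕂 (fun u v => (u.1 * v.1, u.1 • v.2 + v.1 • u.2 + shufL 𝕂 u.2 v.2))
    (fun u u' v => by
      refine Prod.ext ?_ ?_ <;>
        simp [add_mul, add_smul, smul_add, map_add, LinearMap.add_apply] <;> abel)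
    (fun c u v => by
      refine Prod.ext ?_ ?_ <;>
        simp [mul_assoc, mul_smul, smul_add, smul_comm c v.1] <;> abel)
    (fun u v v' => by
      refine Prod.ext ?_ ?_ <;>
        simp [mul_add, add_smul, smul_add, map_add, LinearMap.add_apply] <;> abel)
    (fun c u v => by
      refine Prod.ext ?_ ?_ <;>
        simp [mul_left_comm, mul_smul, smul_add, smul_comm c u.1] <;> abel)

/-- the extension `Δ⁺` of `Δ` to `𝕂·1 ⊕ 𝕂[ST]`, with `Δ⁺(1) = 1 ⊗ 1` and
    `Δ⁺(x) = x ⊗ 1 + 1 ⊗ x + Δ(x)` for `x ∈ 𝕂[ST]`. -/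
noncomputable def DeltaP : Vp 𝕂 →ₗ[𝕂] TensorProduct 𝕂 (Vp 𝕂) (Vp 𝕂) :=
  (LinearMap.toSpanSingleton 𝕂 _ (oneVp 𝕂 ⊗ₜ[𝕂] oneVp 𝕂)).comp (LinearMap.fst 𝕂 𝕂 (V 𝕂))
    + (((TensorProduct.mk 𝕂 (Vp 𝕂) (Vp 𝕂)).flip (oneVp 𝕂)).comp (inclV 𝕂)).comp
        (LinearMap.snd 𝕂 𝕂 (V 𝕂))
    + ((TensorProduct.mk 𝕂 (Vp 𝕂) (Vp 𝕂) (oneVp 𝕂)).comp (inclV 𝕂)).comp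
        (LinearMap.snd 𝕂 𝕂 (V 𝕂))
    + ((TensorProduct.map (inclV 𝕂) (inclV 𝕂)).comp (Delta 𝕂)).comp (LinearMap.snd 𝕂 𝕂 (V 𝕂))

/-- componentwise product on the tensor square: `(a⊗b)·(c⊗d) = (a·c)⊗(b·d)`. -/
noncomputable def mulTsq :
    TensorProduct 𝕂 (Vp 𝕂) (Vp 𝕂) →ₗ[𝕂]
      TensorProduct 𝕂 (Vp 𝕂) (Vp 𝕂) →ₗ[𝕂] TensorProduct 𝕂 (Vp 𝕂) (Vp 𝕂) :=
  TensorProduct.lift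
    (((TensorProduct.mapBilinear (RingHom.id 𝕂) (Vp 𝕂) (Vp 𝕂) (Vp 𝕂) (Vp 𝕂)).comp (mulVp 𝕂)).compl₂
      (mulVp 𝕂))

/-- concatenation on the right with a fixed word, linearized: `x ↦ x × y`. -/
noncomputable def catR (y : List ℕ) : V 𝕂 →ₗ[𝕂] V 𝕂 :=
  Finsupp.lsum 𝕂 fun x => LinearMap.toSpanSingleton 𝕂 _ (Finsupp.single (cat x y) (1 : 𝕂))

/-- concatenation on the left with a fixed word, linearized: `y ↦ x × y`. -/
noncomputable def catL (x : List ℕ) : V 𝕂 →ₗ[𝕂] V 𝕂 :=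
  Finsupp.lsum 𝕂 fun y => LinearMap.toSpanSingleton 𝕂 _ (Finsupp.single (cat x y) (1 : 𝕂))

/-- `Sh^•(r₁,…,r_p)`: surjections onto `{1,…,R-p+1}` (where `R = r₁+…+r_p`), strictly
    increasing on each block, attaining the maximal value exactly at the block ends, and whose
    corestriction to `{1,…,R-p}` is a `(r₁-1,…,r_p-1)`-shuffle. -/
def ShBull (rs : List ℕ) (f : List ℕ) : Prop :=
  memST f rs.sum (rs.sum - rs.length + 1) ∧ blockIncr rs f ∧
    (∀ i, 1 ≤ i → i ≤ rs.sum →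
      (ent f i = rs.sum - rs.length + 1 ↔ ∃ k, k < rs.length ∧ i = (rs.take (k + 1)).sum)) ∧
    IsShuffle (rs.map (· - 1)) (corestrict f (Finset.Icc 1 (rs.sum - rs.length)))

set_option linter.unusedSectionVars false

lemma le_rk_of_mem {a : ℕ} {l : List ℕ} (h : a ∈ l) : a ≤ rk l := by
  induction l with
  | nil => simp at h
  | cons b t ih =>
    rcases List.mem_cons.1 h with rfl | h
    · exact le_max_left _ _
    · exact le_trans (ih h) (le_max_right _ _)

lemma rk_mem {l : List ℕ} (h : l ≠ []) : rk l ∈ l := by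
  induction l with
  | nil => simp at h
  | cons b t ih =>
    rcases eq_or_ne t [] with rfl | ht
    · simp [rk]
    · show max b (rk t) ∈ _
      rcases le_total (rk t) b with h1 | h1
      · simp [max_eq_left h1]
      · rw [max_eq_right h1]
        exact List.mem_cons_of_mem _ (ih ht)

lemma rk_perm {l l' : List ℕ} (h : l.Perm l') : rk l = rk l' := by
  rcases eq_or_ne l [] with rfl | hne
  · simp [List.Perm.nil_eq h]  -- l' = []
  · have hne' : l' ≠ [] := by
      intro hh; subst hh; exact hne (List.Perm.eq_nil h)
    exact le_antisymm (le_rk_of_mem (h.mem_iff.1 (rk_mem hne)))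
      (le_rk_of_mem (h.mem_iff.2 (rk_mem hne')))

lemma rk_append (l₁ l₂ : List ℕ) : rk (l₁ ++ l₂) = max (rk l₁) (rk l₂) := by
  induction l₁ with
  | nil => simp [rk]
  | cons a t ih =>
    show max a (rk (t ++ l₂)) = max (max a (rk t)) (rk l₂)
    rw [ih, max_assoc]

lemma rk_range' (N : ℕ) : rk (List.range' 1 N) = N := by
  induction N with
  | zero => simp [rk]
  | succ k ih =>
    rw [List.range'_1_concat, rk_append, ih]
    show max k (max (1 + k) 0) = k + 1
    omega

lemma isST_perm {l : List ℕ} {N : ℕ} (hN : 1 ≤ N) :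
    (IsST l ∧ l.length = N ∧ rk l = N) ↔ l.Perm (List.range' 1 N) := by
  constructor
  · rintro ⟨⟨hne, hmem⟩, hlen, hrk⟩
    have hd : l.dedup.Perm (List.range' 1 N) := by
      rw [List.perm_ext_iff_of_nodup (List.nodup_dedup l) (List.nodup_range')]
      intro a
      rw [List.mem_dedup, hmem, List.mem_range'_1, hrk]
      omega
    have hlen' : l.dedup.length = N := hd.length_eq.trans (by simp)
    have : l.dedup = l := (List.dedup_sublist l).eq_of_length (by rw [hlen', hlen])
    rwa [this] at hd
  · intro h
    have hlen : l.length = N := h.length_eq.trans (by simp)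
    have hrk : rk l = N := (rk_perm h).trans (rk_range' N)
    refine ⟨⟨?_, ?_⟩, hlen, hrk⟩
    · intro hh; subst hh; simp at hlen; omega
    · intro k
      rw [h.mem_iff, List.mem_range'_1, hrk]
      omega

/-! ent basics -/

lemma ent_eq_getElem {l : List ℕ} {i : ℕ} (h1 : 1 ≤ i) (h2 : i ≤ l.length) :
    ent l i = l[i - 1]'(by omega) := List.getD_eq_getElem l 0 (by omega)

lemma ent_getElem {l : List ℕ} {k : ℕ} (h : k < l.length) : ent l (k + 1) = l[k] := by
  rw [ent_eq_getElem (by omega) (by omega)]; simp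

/-! perm-based facts -/

section permFacts
variable {w : List ℕ} {T : ℕ} (hp : w.Perm (List.range' 1 T))

include hp

lemma perm_length : w.length = T := hp.length_eq.trans (by simp)

lemma perm_nodup : w.Nodup := hp.symm.nodup (List.nodup_range')

lemma ent_range {i : ℕ} (h1 : 1 ≤ i) (h2 : i ≤ T) : 1 ≤ ent w i ∧ ent w i ≤ T := by
  have hl := perm_length hp
  rw [ent_eq_getElem h1 (by omega)]
  have : w[i-1]'(by omega) ∈ w := List.getElem_mem _
  have := hp.mem_iff.1 this
  rw [List.mem_range'_1] at this
  omega

lemma ent_inj {i j : ℕ} (h1 : 1 ≤ i) (h2 : i ≤ T) (h3 : 1 ≤ j) (h4 : j ≤ T)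
    (h : ent w i = ent w j) : i = j := by
  have hl := perm_length hp
  rw [ent_eq_getElem h1 (by omega), ent_eq_getElem h3 (by omega)] at h
  have := ((perm_nodup hp).getElem_inj_iff).1 h
  omega

lemma exists_pos {v : ℕ} (h1 : 1 ≤ v) (h2 : v ≤ T) :
    ∃ i, 1 ≤ i ∧ i ≤ T ∧ ent w i = v := by
  have hv : v ∈ w := hp.mem_iff.2 (by rw [List.mem_range'_1]; omega)
  obtain ⟨k, hk, hkv⟩ := List.getElem_of_mem hv
  have hl := perm_length hp
  exact ⟨k + 1, by omega, by omega, by rw [ent_getElem hk]; exact hkv⟩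

end permFacts

/-! blockIncr for two and three blocks -/

lemma blockIncr2_iff {a b : ℕ} {f : List ℕ} :
    blockIncr [a, b] f ↔
      (∀ i j, 0 < i → i < j → j ≤ a → ent f i < ent f j) ∧
      (∀ i j, a < i → i < j → j ≤ a + b → ent f i < ent f j) := by
  constructor
  · intro h
    refine ⟨fun i j h1 h2 h3 => h 0 (by norm_num) i j (by simpa) (by omega) (by simp; omega),
      fun i j h1 h2 h3 => h 1 (by norm_num) i j (by simpa) (by omega) (by simp; omega)⟩
  · rintro ⟨h0, h1⟩ k hk i j hi hij hj
    simp only [List.length_cons, List.length_nil] at hk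
    interval_cases k
    · exact h0 i j (by simpa using hi) hij (by simpa using hj)
    · exact h1 i j (by simpa using hi) hij (by simp at hj; omega)

lemma blockIncr3_iff {a b c : ℕ} {f : List ℕ} :
    blockIncr [a, b, c] f ↔
      (∀ i j, 0 < i → i < j → j ≤ a → ent f i < ent f j) ∧
      (∀ i j, a < i → i < j → j ≤ a + b → ent f i < ent f j) ∧
      (∀ i j, a + b < i → i < j → j ≤ a + b + c → ent f i < ent f j) := by
  constructor
  · intro h
    refine ⟨fun i j h1 h2 h3 => h 0 (by norm_num) i j (by simpa) (by omega) (by simp; omega),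
      fun i j h1 h2 h3 => h 1 (by norm_num) i j (by simpa) (by omega) (by simp; omega),
      fun i j h1 h2 h3 => h 2 (by norm_num) i j (by simp; omega) (by omega) (by simp; omega)⟩
  · rintro ⟨h0, h1, h2⟩ k hk i j hi hij hj
    simp only [List.length_cons, List.length_nil] at hk
    interval_cases k
    · exact h0 i j (by simpa using hi) hij (by simpa using hj)
    · exact h1 i j (by simpa using hi) hij (by simp at hj; omega)
    · exact h2 i j (by simp at hi; omega) hij (by simp at hj; omega)

/-- monotone (≤) version from strict block increase -/
lemma mono_of_strict {f : List ℕ} {lo hi : ℕ}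
    (h : ∀ i j, lo < i → i < j → j ≤ hi → ent f i < ent f j)
    {i j : ℕ} (h1 : lo < i) (h2 : i ≤ j) (h3 : j ≤ hi) : ent f i ≤ ent f j := by
  rcases eq_or_lt_of_le h2 with rfl | hlt
  · exact le_refl _
  · exact le_of_lt (h i j h1 hlt h3)

/-- sort a list of naturals increasingly -/
def srt (l : List ℕ) : List ℕ := Multiset.sort (l : Multiset ℕ) (· ≤ ·)

lemma srt_perm (l : List ℕ) : (srt l).Perm l := by
  have := Multiset.sort_eq (α := ℕ) (l : Multiset ℕ) (· ≤ ·)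
  exact Quotient.exact this

lemma srt_sorted (l : List ℕ) : (srt l).Pairwise (· ≤ ·) :=
  Multiset.pairwise_sort _ _

section srtFacts
variable {a : List ℕ} (ha : a.Nodup)
include ha

lemma srt_nodup : (srt a).Nodup := (srt_perm a).symm.nodup ha

lemma srt_strict {i j : ℕ} (hi : i < (srt a).length) (hj : j < (srt a).length)
    (hij : i < j) : (srt a)[i] < (srt a)[j] := by
  have hle : (srt a)[i] ≤ (srt a)[j] :=
    (srt_sorted a).rel_get_of_lt (a := ⟨i, hi⟩) (b := ⟨j, hj⟩) hij
  have hne : (srt a)[i] ≠ (srt a)[j] := by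
    intro h
    have := ((srt_nodup ha).getElem_inj_iff).1 h
    omega
  omega

lemma srt_idx_lt {v : ℕ} (hv : v ∈ a) : (srt a).idxOf v < (srt a).length :=
  List.idxOf_lt_length_iff.2 ((srt_perm a).mem_iff.2 hv)

lemma srt_get_idx {v : ℕ} (hv : v ∈ a) : (srt a)[(srt a).idxOf v]'(srt_idx_lt ha hv) = v :=
  List.getElem_idxOf _

lemma srt_idx_strict {v v' : ℕ} (hv : v ∈ a) (hv' : v' ∈ a) :
    (srt a).idxOf v < (srt a).idxOf v' ↔ v < v' := by
  constructor
  · intro h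
    have := srt_strict ha (srt_idx_lt ha hv) (srt_idx_lt ha hv') h
    rwa [srt_get_idx ha hv, srt_get_idx ha hv'] at this
  · intro h
    by_contra hc
    push_neg at hc
    rcases eq_or_lt_of_le hc with he | hlt
    · have : v' = v := (List.idxOf_inj ((srt_perm a).mem_iff.2 hv')).1 he
      omega
    · have := srt_strict ha (srt_idx_lt ha hv') (srt_idx_lt ha hv) hlt
      rw [srt_get_idx ha hv, srt_get_idx ha hv'] at this
      omega

lemma srt_idx_getElem {i : ℕ} (hi : i < (srt a).length) :
    (srt a).idxOf ((srt a)[i]) = i := by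
  have hmem : (srt a)[i] ∈ srt a := List.getElem_mem _
  have hlt : (srt a).idxOf ((srt a)[i]) < (srt a).length := List.idxOf_lt_length_iff.2 hmem
  have : (srt a)[(srt a).idxOf ((srt a)[i])]'hlt = (srt a)[i] := List.getElem_idxOf _
  exact ((srt_nodup ha).getElem_inj_iff).1 this

lemma map_idx_perm : (a.map (fun v => (srt a).idxOf v + 1)).Perm (List.range' 1 a.length) := by
  have h1 : (a.map (fun v => (srt a).idxOf v + 1)).Perm
      ((srt a).map (fun v => (srt a).idxOf v + 1)) := ((srt_perm a).symm).map _
  have h2 : (srt a).map (fun v => (srt a).idxOf v + 1) = List.range' 1 a.length := by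
    apply List.ext_getElem
    · simp [(srt_perm a).length_eq]
    · intro i h hh
      simp only [List.getElem_map, List.getElem_range']
      rw [srt_idx_getElem ha (by simpa using h)]
      omega
  rw [h2] at h1
  exact h1

/-- the largest element of srt a bounds all members -/
lemma srt_last_max {v : ℕ} (hv : v ∈ a) (hne : 0 < (srt a).length) :
    v ≤ (srt a)[(srt a).length - 1]'(by omega) := by
  have hidx := srt_idx_lt ha hv
  rcases eq_or_lt_of_le (Nat.le_sub_one_of_lt hidx) with he | hlt
  · have h2 : (srt a)[(srt a).length - 1]'(by omega) = v := by
      have h3 : (srt a).idxOf ((srt a)[(srt a).length - 1]'(by omega)) =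
          (srt a).length - 1 := srt_idx_getElem ha (by omega)
      have h4 : (srt a).idxOf ((srt a)[(srt a).length - 1]'(by omega)) =
          (srt a).idxOf v := by rw [h3, he]
      exact (List.idxOf_inj (List.getElem_mem _)).1 h4
    omega
  · exact le_of_lt (by rw [← srt_get_idx ha hv]; exact srt_strict ha hidx (by omega) hlt)

end srtFacts

/-! structural lemmas -/

lemma idW_eq (k : ℕ) : idW k = List.range' 1 k := by
  rw [List.range'_eq_map_range]
  simp [idW, Nat.add_comm]

lemma sum2 (a b : ℕ) : ([a, b] : List ℕ).sum = a + b := by simp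
lemma sum3 (a b c : ℕ) : ([a, b, c] : List ℕ).sum = a + b + c := by simp [Nat.add_assoc]

lemma shuffle2_iff {a b : ℕ} {f : List ℕ} (h : 1 ≤ a + b) :
    IsShuffle [a, b] f ↔ f.Perm (List.range' 1 (a + b)) ∧ blockIncr [a, b] f := by
  unfold IsShuffle IsStuffle
  rw [sum2]
  constructor
  · rintro ⟨⟨h1, h2, h3⟩, h4⟩
    exact ⟨(isST_perm h).1 ⟨h1, h2, h4⟩, h3⟩
  · rintro ⟨h1, h2⟩
    obtain ⟨p1, p2, p3⟩ := (isST_perm h).2 h1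
    exact ⟨⟨p1, p2, h2⟩, p3⟩

lemma shuffle3_iff {a b c : ℕ} {f : List ℕ} (h : 1 ≤ a + b + c) :
    IsShuffle [a, b, c] f ↔ f.Perm (List.range' 1 (a + b + c)) ∧ blockIncr [a, b, c] f := by
  unfold IsShuffle IsStuffle
  rw [sum3]
  constructor
  · rintro ⟨⟨h1, h2, h3⟩, h4⟩
    exact ⟨(isST_perm h).1 ⟨h1, h2, h4⟩, h3⟩
  · rintro ⟨h1, h2⟩
    obtain ⟨p1, p2, p3⟩ := (isST_perm h).2 h1
    exact ⟨⟨p1, p2, h2⟩, p3⟩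

lemma cat_right {g : List ℕ} {N : ℕ} (hg : rk g = N) (r : ℕ) :
    cat g (idW r) = g ++ List.range' (N + 1) r := by
  unfold cat
  rw [hg, idW_eq]
  congr 1
  have : (fun x => x + N) = (fun x => N + x) := by funext x; omega
  rw [this, List.map_add_range']

lemma cat_left (n : ℕ) (g : List ℕ) :
    cat (idW n) g = List.range' 1 n ++ g.map (· + n) := by
  unfold cat
  rw [idW_eq, rk_range']

lemma wcomp_perm {f x : List ℕ} {T : ℕ} (hx : x.Perm (List.range' 1 T))
    (hf : f.length = T) : (wcomp f x).Perm f := by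
  have h1 : (wcomp f x).Perm ((List.range' 1 T).map (ent f)) := hx.map _
  have h2 : (List.range' 1 T).map (ent f) = f := by
    apply List.ext_getElem
    · simp [hf]
    · intro i h hh
      simp only [List.getElem_map, List.getElem_range']
      rw [ent_eq_getElem (by omega) (by omega)]
      congr 1
      omega
  rwa [h2] at h1

lemma ent_wcomp {f x : List ℕ} {i : ℕ} (h1 : 1 ≤ i) (h2 : i ≤ x.length) :
    ent (wcomp f x) i = ent f (ent x i) := by
  have hl : i - 1 < x.length := by omega
  unfold wcomp
  rw [ent_eq_getElem h1 (by simpa), List.getElem_map, ← ent_eq_getElem h1 h2]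

lemma ent_append_left {l₁ l₂ : List ℕ} {i : ℕ} (h1 : 1 ≤ i) (h2 : i ≤ l₁.length) :
    ent (l₁ ++ l₂) i = ent l₁ i := by
  rw [ent_eq_getElem h1 (by simp; omega), ent_eq_getElem h1 h2]
  exact List.getElem_append_left (by omega)

lemma ent_append_right {l₁ l₂ : List ℕ} {i : ℕ} (h1 : l₁.length < i)
    (h2 : i ≤ l₁.length + l₂.length) :
    ent (l₁ ++ l₂) i = ent l₂ (i - l₁.length) := by
  rw [ent_eq_getElem (by omega) (by simp; omega), ent_eq_getElem (by omega) (by omega)]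
  rw [List.getElem_append_right (by omega)]
  congr 1
  omega

/-- two-block shuffles have their maximum at a block end -/
lemma sh2_top {a b : ℕ} {f : List ℕ} (ha : 1 ≤ a) (hb : 1 ≤ b)
    (hf : IsShuffle [a, b] f) :
    (ent f a < ent f (a + b) → ent f (a + b) = a + b) ∧
    (ent f (a + b) < ent f a → ent f a = a + b) := by
  obtain ⟨hp, hbi⟩ := (shuffle2_iff (by omega)).1 hf
  obtain ⟨hb1, hb2⟩ := blockIncr2_iff.1 hbi
  obtain ⟨k, hk1, hk2, hk3⟩ := exists_pos hp (v := a + b) (by omega) (le_refl _)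
  have hmax : a + b ≤ max (ent f a) (ent f (a + b)) := by
    rcases le_or_gt k a with h | h
    · have : ent f k ≤ ent f a := mono_of_strict hb1 (by omega) h (le_refl _)
      omega
    · have : ent f k ≤ ent f (a + b) := mono_of_strict hb2 h hk2 (le_refl _)
      omega
  have r1 := ent_range hp (i := a) (by omega) (by omega)
  have r2 := ent_range hp (i := a + b) (by omega) (le_refl _)
  omega

lemma ent_range'_gen {s r k : ℕ} (h1 : 1 ≤ k) (h2 : k ≤ r) :
    ent (List.range' s r) k = s + (k - 1) := by
  rw [ent_eq_getElem h1 (by simpa), List.getElem_range']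
  simp

lemma range'_append_1 (N r : ℕ) :
    List.range' 1 N ++ List.range' (N + 1) r = List.range' 1 (N + r) := by
  have h := List.range'_append (s := 1) (m := N) (n := r) (step := 1)
  have e1 : 1 + 1 * N = N + 1 := by omega
  have e2 : r + N = N + r := by omega
  rw [e1] at h
  exact h

lemma left_comp {n m r : ℕ} {f g : List ℕ} (hn : 1 ≤ n) (hm : 1 ≤ m) (hr : 1 ≤ r)
    (hf : IsShuffle [n + m, r] f) (hg : IsShuffle [n, m] g) :
    IsShuffle [n, m, r] (wcomp f (cat g (idW r))) ∧
    (∀ i, 1 ≤ i → i ≤ n + m → ent (wcomp f (cat g (idW r))) i = ent f (ent g i)) ∧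
    (∀ j, n + m < j → j ≤ n + m + r → ent (wcomp f (cat g (idW r))) j = ent f j) := by
  set N := n + m with hN
  obtain ⟨hpf, hbf⟩ := (shuffle2_iff (by omega)).1 hf
  obtain ⟨hpg, hbg⟩ := (shuffle2_iff (by omega)).1 hg
  have hflen : f.length = N + r := perm_length hpf
  have hglen : g.length = N := perm_length hpg
  have hgrk : rk g = N := (rk_perm hpg).trans (rk_range' N)
  have hxeq : cat g (idW r) = g ++ List.range' (N + 1) r := cat_right hgrk r
  have hxlen : (cat g (idW r)).length = N + r := by rw [hxeq]; simp [hglen]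
  have hx : (cat g (idW r)).Perm (List.range' 1 (N + r)) := by
    rw [hxeq, ← range'_append_1]
    exact hpg.append_right _
  have hw : (wcomp f (cat g (idW r))).Perm (List.range' 1 (N + r)) :=
    (wcomp_perm hx hflen).trans hpf
  obtain ⟨f1, f2⟩ := blockIncr2_iff.1 hbf
  obtain ⟨g1, g2⟩ := blockIncr2_iff.1 hbg
  have E1 : ∀ i, 1 ≤ i → i ≤ N → ent (wcomp f (cat g (idW r))) i = ent f (ent g i) := by
    intro i h1 h2
    rw [ent_wcomp h1 (by omega), hxeq, ent_append_left h1 (by omega)]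
  have E2 : ∀ j, N < j → j ≤ N + r → ent (wcomp f (cat g (idW r))) j = ent f j := by
    intro j h1 h2
    rw [ent_wcomp (by omega) (by omega), hxeq,
      ent_append_right (by omega) (by simp [hglen]; omega)]
    rw [hglen, ent_range'_gen (by omega) (by omega)]
    congr 1
    omega
  have hbw : blockIncr [n, m, r] (wcomp f (cat g (idW r))) := by
    rw [blockIncr3_iff]
    refine ⟨?_, ?_, ?_⟩
    · intro i j h1 h2 h3
      rw [E1 i (by omega) (by omega), E1 j (by omega) (by omega)]
      have hgi := ent_range hpg (i := i) (by omega) (by omega)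
      have hgj := ent_range hpg (i := j) (by omega) (by omega)
      exact f1 _ _ (by omega) (g1 i j (by omega) h2 h3) (by omega)
    · intro i j h1 h2 h3
      rw [E1 i (by omega) (by omega), E1 j (by omega) (by omega)]
      have hgi := ent_range hpg (i := i) (by omega) (by omega)
      have hgj := ent_range hpg (i := j) (by omega) (by omega)
      exact f1 _ _ (by omega) (g2 i j (by omega) h2 (by omega)) (by omega)
    · intro i j h1 h2 h3
      rw [E2 i (by omega) (by omega), E2 j (by omega) (by omega)]
      exact f2 i j (by omega) h2 (by omega)
  exact ⟨(shuffle3_iff (by omega)).2 ⟨hw, hbw⟩, E1, E2⟩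

lemma right_comp {n m r : ℕ} {f g : List ℕ} (hn : 1 ≤ n) (hm : 1 ≤ m) (hr : 1 ≤ r)
    (hf : IsShuffle [n, m + r] f) (hg : IsShuffle [m, r] g) :
    IsShuffle [n, m, r] (wcomp f (cat (idW n) g)) ∧
    (∀ i, 1 ≤ i → i ≤ n → ent (wcomp f (cat (idW n) g)) i = ent f i) ∧
    (∀ j, 1 ≤ j → j ≤ m + r → ent (wcomp f (cat (idW n) g)) (n + j) = ent f (n + ent g j)) := by
  obtain ⟨hpf, hbf⟩ := (shuffle2_iff (by omega)).1 hf
  obtain ⟨hpg, hbg⟩ := (shuffle2_iff (by omega)).1 hg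
  have hflen : f.length = n + (m + r) := perm_length hpf
  have hglen : g.length = m + r := perm_length hpg
  have hxeq : cat (idW n) g = List.range' 1 n ++ g.map (· + n) := cat_left n g
  have hmap : (g.map (· + n)).Perm (List.range' (n + 1) (m + r)) := by
    have h1 : (g.map (· + n)).Perm ((List.range' 1 (m + r)).map (· + n)) := hpg.map _
    have h2 : (List.range' 1 (m + r)).map (· + n) = List.range' (n + 1) (m + r) := by
      have e : (fun x => x + n) = (fun x => n + x) := by funext x; omega
      rw [e, List.map_add_range']
    rwa [h2] at h1
  have hx : (cat (idW n) g).Perm (List.range' 1 (n + (m + r))) := by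
    rw [hxeq, ← range'_append_1]
    exact (List.Perm.refl _).append hmap
  have hxlen : (cat (idW n) g).length = n + (m + r) := perm_length hx
  have hw : (wcomp f (cat (idW n) g)).Perm (List.range' 1 (n + (m + r))) :=
    (wcomp_perm hx hflen).trans hpf
  obtain ⟨f1, f2⟩ := blockIncr2_iff.1 hbf
  obtain ⟨g1, g2⟩ := blockIncr2_iff.1 hbg
  have E1 : ∀ i, 1 ≤ i → i ≤ n → ent (wcomp f (cat (idW n) g)) i = ent f i := by
    intro i h1 h2
    rw [ent_wcomp h1 (by omega), hxeq, ent_append_left h1 (by simpa),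
      ent_range'_gen h1 (by omega)]
    congr 1
    omega
  have E2 : ∀ j, 1 ≤ j → j ≤ m + r →
      ent (wcomp f (cat (idW n) g)) (n + j) = ent f (n + ent g j) := by
    intro j h1 h2
    rw [ent_wcomp (by omega) (by omega), hxeq,
      ent_append_right (by simp <;> omega) (by simp [hglen] <;> omega)]
    have : n + j - (List.range' 1 n).length = j := by simp
    rw [this]
    have hj : j - 1 < g.length := by omega
    have : ent (g.map (· + n)) j = ent g j + n := by
      unfold ent
      rw [List.getD_eq_getElem _ _ (by simpa), List.getD_eq_getElem _ _ hj, List.getElem_map]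
    rw [this]
    congr 1
    omega
  have hbw : blockIncr [n, m, r] (wcomp f (cat (idW n) g)) := by
    rw [blockIncr3_iff]
    refine ⟨?_, ?_, ?_⟩
    · intro i j h1 h2 h3
      rw [E1 i (by omega) (by omega), E1 j (by omega) (by omega)]
      exact f1 i j (by omega) h2 h3
    · intro i j h1 h2 h3
      have hi : i = n + (i - n) := by omega
      have hj : j = n + (j - n) := by omega
      rw [hi, hj, E2 _ (by omega) (by omega), E2 _ (by omega) (by omega)]
      have hgi := ent_range hpg (i := i - n) (by omega) (by omega)
      have hgj := ent_range hpg (i := j - n) (by omega) (by omega)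
      exact f2 _ _ (by omega) (by have := g1 (i - n) (j - n) (by omega) (by omega) (by omega); omega)
        (by omega)
    · intro i j h1 h2 h3
      have hi : i = n + (i - n) := by omega
      have hj : j = n + (j - n) := by omega
      rw [hi, hj, E2 _ (by omega) (by omega), E2 _ (by omega) (by omega)]
      have hgi := ent_range hpg (i := i - n) (by omega) (by omega)
      have hgj := ent_range hpg (i := j - n) (by omega) (by omega)
      exact f2 _ _ (by omega)
        (by have := g2 (i - n) (j - n) (by omega) (by omega) (by omega); omega) (by omega)
  have hsh : IsShuffle [n, m, r] (wcomp f (cat (idW n) g)) := by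
    refine (shuffle3_iff (by omega)).2 ⟨?_, hbw⟩
    have e : n + (m + r) = n + m + r := by omega
    rwa [e] at hw
  exact ⟨hsh, E1, E2⟩

/-! ent-level sort lemmas -/

section srtEnt
variable {a : List ℕ} (ha : a.Nodup)
include ha

lemma srt_ent_strict {i j : ℕ} (h1 : 1 ≤ i) (hij : i < j) (hj : j ≤ (srt a).length) :
    ent (srt a) i < ent (srt a) j := by
  rw [ent_eq_getElem h1 (by omega), ent_eq_getElem (by omega) hj]
  exact srt_strict ha (by omega) (by omega) (by omega)

lemma srt_ent_last {v : ℕ} (hv : v ∈ a) (h : 1 ≤ (srt a).length) :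
    v ≤ ent (srt a) (srt a).length := by
  rw [ent_eq_getElem h (le_refl _)]
  exact srt_last_max ha hv (by omega)

lemma srt_ent_idx {v : ℕ} (hv : v ∈ a) :
    ent (srt a) ((srt a).idxOf v + 1) = v := by
  rw [ent_getElem (srt_idx_lt ha hv)]
  exact srt_get_idx ha hv

lemma srt_ent_mem {i : ℕ} (h1 : 1 ≤ i) (h2 : i ≤ (srt a).length) : ent (srt a) i ∈ a := by
  rw [ent_eq_getElem h1 h2]
  exact (srt_perm a).mem_iff.1 (List.getElem_mem _)

end srtEnt

lemma ent_ext {l l' : List ℕ} (h : l.length = l'.length)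
    (he : ∀ i, 1 ≤ i → i ≤ l.length → ent l i = ent l' i) : l = l' := by
  apply List.ext_getElem h
  intro k h1 h2
  have := he (k + 1) (by omega) (by omega)
  rwa [ent_getElem h1, ent_getElem h2] at this

lemma ent_map {F : ℕ → ℕ} {l : List ℕ} {i : ℕ} (h1 : 1 ≤ i) (h2 : i ≤ l.length) :
    ent (l.map F) i = F (ent l i) := by
  unfold ent
  rw [List.getD_eq_getElem _ _ (by rw [List.length_map]; omega),
    List.getD_eq_getElem _ _ (by omega : i - 1 < l.length), List.getElem_map]

lemma ent_take {l : List ℕ} {N i : ℕ} (h1 : 1 ≤ i) (h2 : i ≤ N) (h3 : N ≤ l.length) :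
    ent (l.take N) i = ent l i := by
  rw [ent_eq_getElem h1 (by rw [List.length_take]; omega), ent_eq_getElem h1 (by omega)]
  exact List.getElem_take

lemma ent_drop {l : List ℕ} {N i : ℕ} (h1 : 1 ≤ i) (h2 : i ≤ l.length - N) :
    ent (l.drop N) i = ent l (N + i) := by
  rw [ent_eq_getElem h1 (by rw [List.length_drop]; omega),
    ent_eq_getElem (by omega) (by omega), List.getElem_drop]
  congr 1
  omega

lemma left_decomp {n m r : ℕ} {w : List ℕ} (hn : 1 ≤ n) (hm : 1 ≤ m) (hr : 1 ≤ r)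
    (hw : IsShuffle [n, m, r] w) :
    ∃ f g, IsShuffle [n + m, r] f ∧ IsShuffle [n, m] g ∧ w = wcomp f (cat g (idW r)) ∧
      (∀ i j, 1 ≤ i → i ≤ n + m → 1 ≤ j → j ≤ n + m →
        (ent g i < ent g j ↔ ent w i < ent w j)) ∧
      ent f (n + m + r) = ent w (n + m + r) ∧
      (∃ p, 1 ≤ p ∧ p ≤ n + m ∧ ent f (n + m) = ent w p) ∧
      (∀ p, 1 ≤ p → p ≤ n + m → ent w p ≤ ent f (n + m)) := by
  obtain ⟨hpw, hbw⟩ := (shuffle3_iff (by omega)).1 hw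
  obtain ⟨w1, w2, w3⟩ := blockIncr3_iff.1 hbw
  have hwlen : w.length = n + m + r := perm_length hpw
  have hwn : w.Nodup := perm_nodup hpw
  set a := w.take (n + m) with haa
  set b := w.drop (n + m) with hbb
  have ha : a.Nodup := (List.take_sublist (n + m) w).nodup hwn
  have alen : a.length = n + m := by rw [haa, List.length_take]; omega
  have blen : b.length = r := by rw [hbb, List.length_drop]; omega
  have slen : (srt a).length = n + m := (srt_perm a).length_eq.trans alen
  set f := srt a ++ b with hff
  set g := a.map (fun v => (srt a).idxOf v + 1) with hgg
  have enta : ∀ i (_ : 1 ≤ i) (_ : i ≤ n + m), ent a i = ent w i := by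
    intro i h1 h2
    rw [haa]
    exact ent_take h1 h2 (by omega)
  have amem : ∀ i (_ : 1 ≤ i) (_ : i ≤ n + m), ent w i ∈ a := by
    intro i h1 h2
    rw [← enta i h1 h2, ent_eq_getElem h1 (by omega)]
    exact List.getElem_mem _
  have entg : ∀ i (_ : 1 ≤ i) (_ : i ≤ n + m), ent g i = (srt a).idxOf (ent w i) + 1 := by
    intro i h1 h2
    rw [hgg, ent_map h1 (by omega), enta i h1 h2]
  have giff : ∀ i j, 1 ≤ i → i ≤ n + m → 1 ≤ j → j ≤ n + m →
      (ent g i < ent g j ↔ ent w i < ent w j) := by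
    intro i j h1 h2 h3 h4
    rw [entg i h1 h2, entg j h3 h4]
    have := srt_idx_strict ha (amem i h1 h2) (amem j h3 h4)
    omega
  have hgperm : g.Perm (List.range' 1 (n + m)) := by
    have := map_idx_perm ha
    rwa [alen] at this
  have hg : IsShuffle [n, m] g := by
    refine (shuffle2_iff (by omega)).2 ⟨hgperm, blockIncr2_iff.2 ⟨?_, ?_⟩⟩
    · intro i j h1 h2 h3
      exact (giff i j (by omega) (by omega) (by omega) (by omega)).2
        (w1 i j h1 h2 (by omega))
    · intro i j h1 h2 h3
      exact (giff i j (by omega) (by omega) (by omega) (by omega)).2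
        (w2 i j h1 h2 h3)
  have entfL : ∀ i (_ : 1 ≤ i) (_ : i ≤ n + m), ent f i = ent (srt a) i := by
    intro i h1 h2
    rw [hff, ent_append_left h1 (by omega)]
  have entfR : ∀ i (_ : n + m < i) (_ : i ≤ n + m + r), ent f i = ent w i := by
    intro i h1 h2
    rw [hff, ent_append_right (by omega) (by rw [slen, blen]; omega), slen, hbb,
      ent_drop (by omega) (by omega)]
    congr 1
    omega
  have hfperm : f.Perm (List.range' 1 (n + m + r)) := by
    have h1 : f.Perm (a ++ b) := (srt_perm a).append_right b
    have h2 : a ++ b = w := List.take_append_drop (n + m) w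
    rw [h2] at h1
    exact h1.trans hpw
  have hf : IsShuffle [n + m, r] f := by
    refine (shuffle2_iff (by omega)).2 ⟨hfperm, blockIncr2_iff.2 ⟨?_, ?_⟩⟩
    · intro i j h1 h2 h3
      rw [entfL i (by omega) (by omega), entfL j (by omega) h3]
      exact srt_ent_strict ha (by omega) h2 (by omega)
    · intro i j h1 h2 h3
      rw [entfR i h1 (by omega), entfR j (by omega) (by omega)]
      exact w3 i j (by omega) h2 (by omega)
  obtain ⟨hsh, E1, E2⟩ := left_comp hn hm hr hf hg
  have hid : w = wcomp f (cat g (idW r)) := by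
    apply ent_ext
    · have hp : (wcomp f (cat g (idW r))).Perm (List.range' 1 (n + m + r)) :=
        ((shuffle3_iff (by omega)).1 hsh).1
      rw [hwlen, perm_length hp]
    · intro i h1 h2
      rw [hwlen] at h2
      rcases le_or_gt i (n + m) with hle | hlt
      · rw [E1 i h1 hle, entg i h1 hle, entfL _ (by omega) (by
          have := srt_idx_lt ha (amem i h1 hle); omega)]
        exact (srt_ent_idx ha (amem i h1 hle)).symm
      · rw [E2 i hlt (by omega), entfR i hlt (by omega)]
  have ex1 : ent f (n + m + r) = ent w (n + m + r) := entfR _ (by omega) (by omega)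
  have ex2 : ∃ p, 1 ≤ p ∧ p ≤ n + m ∧ ent f (n + m) = ent w p := by
    have hmem : ent (srt a) (n + m) ∈ a := srt_ent_mem ha (by omega) (by omega)
    obtain ⟨k, hk, hkv⟩ := List.getElem_of_mem hmem
    refine ⟨k + 1, by omega, by omega, ?_⟩
    rw [entfL _ (by omega) (le_refl _), ← enta (k + 1) (by omega) (by omega), ent_getElem hk]
    exact hkv.symm
  have ex3 : ∀ p, 1 ≤ p → p ≤ n + m → ent w p ≤ ent f (n + m) := by
    intro p h1 h2
    rw [entfL _ (by omega) (le_refl _)]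
    have := srt_ent_last ha (amem p h1 h2) (by omega)
    rwa [slen] at this
  exact ⟨f, g, hf, hg, hid, giff, ex1, ex2, ex3⟩

lemma right_decomp {n m r : ℕ} {w : List ℕ} (hn : 1 ≤ n) (hm : 1 ≤ m) (hr : 1 ≤ r)
    (hw : IsShuffle [n, m, r] w) :
    ∃ f g, IsShuffle [n, m + r] f ∧ IsShuffle [m, r] g ∧ w = wcomp f (cat (idW n) g) ∧
      (∀ i j, 1 ≤ i → i ≤ m + r → 1 ≤ j → j ≤ m + r →
        (ent g i < ent g j ↔ ent w (n + i) < ent w (n + j))) ∧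
      ent f n = ent w n ∧
      (∃ p, n < p ∧ p ≤ n + m + r ∧ ent f (n + m + r) = ent w p) ∧
      (∀ p, n < p → p ≤ n + m + r → ent w p ≤ ent f (n + m + r)) := by
  obtain ⟨hpw, hbw⟩ := (shuffle3_iff (by omega)).1 hw
  obtain ⟨w1, w2, w3⟩ := blockIncr3_iff.1 hbw
  have hwlen : w.length = n + m + r := perm_length hpw
  have hwn : w.Nodup := perm_nodup hpw
  set a := w.take n with haa
  set b := w.drop n with hbb
  have hb : b.Nodup := (List.drop_sublist n w).nodup hwn
  have alen : a.length = n := by rw [haa, List.length_take]; omega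
  have blen : b.length = m + r := by rw [hbb, List.length_drop]; omega
  have slen : (srt b).length = m + r := (srt_perm b).length_eq.trans blen
  set f := a ++ srt b with hff
  set g := b.map (fun v => (srt b).idxOf v + 1) with hgg
  have enta : ∀ i (_ : 1 ≤ i) (_ : i ≤ n), ent a i = ent w i := by
    intro i h1 h2
    rw [haa]
    exact ent_take h1 h2 (by omega)
  have entb : ∀ i (_ : 1 ≤ i) (_ : i ≤ m + r), ent b i = ent w (n + i) := by
    intro i h1 h2
    rw [hbb]
    exact ent_drop h1 (by omega)
  have bmem : ∀ i (_ : 1 ≤ i) (_ : i ≤ m + r), ent w (n + i) ∈ b := by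
    intro i h1 h2
    rw [← entb i h1 h2, ent_eq_getElem h1 (by omega)]
    exact List.getElem_mem _
  have entg : ∀ i (_ : 1 ≤ i) (_ : i ≤ m + r),
      ent g i = (srt b).idxOf (ent w (n + i)) + 1 := by
    intro i h1 h2
    rw [hgg, ent_map h1 (by omega), entb i h1 h2]
  have giff : ∀ i j, 1 ≤ i → i ≤ m + r → 1 ≤ j → j ≤ m + r →
      (ent g i < ent g j ↔ ent w (n + i) < ent w (n + j)) := by
    intro i j h1 h2 h3 h4
    rw [entg i h1 h2, entg j h3 h4]
    have := srt_idx_strict hb (bmem i h1 h2) (bmem j h3 h4)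
    omega
  have hgperm : g.Perm (List.range' 1 (m + r)) := by
    have := map_idx_perm hb
    rwa [blen] at this
  have hg : IsShuffle [m, r] g := by
    refine (shuffle2_iff (by omega)).2 ⟨hgperm, blockIncr2_iff.2 ⟨?_, ?_⟩⟩
    · intro i j h1 h2 h3
      exact (giff i j (by omega) (by omega) (by omega) (by omega)).2
        (w2 (n + i) (n + j) (by omega) (by omega) (by omega))
    · intro i j h1 h2 h3
      exact (giff i j (by omega) (by omega) (by omega) (by omega)).2
        (w3 (n + i) (n + j) (by omega) (by omega) (by omega))
  have entfL : ∀ i (_ : 1 ≤ i) (_ : i ≤ n), ent f i = ent w i := by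
    intro i h1 h2
    rw [hff, ent_append_left h1 (by omega), enta i h1 h2]
  have entfR : ∀ j (_ : 1 ≤ j) (_ : j ≤ m + r), ent f (n + j) = ent (srt b) j := by
    intro j h1 h2
    rw [hff, ent_append_right (by omega) (by rw [alen, slen]; omega), alen]
    congr 1
    omega
  have hfperm : f.Perm (List.range' 1 (n + (m + r))) := by
    have h1 : f.Perm (a ++ b) := List.Perm.append_left a (srt_perm b)
    have h2 : a ++ b = w := List.take_append_drop n w
    rw [h2] at h1
    have e : n + (m + r) = n + m + r := by omega
    rw [e]
    exact h1.trans hpw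
  have hf : IsShuffle [n, m + r] f := by
    refine (shuffle2_iff (by omega)).2 ⟨hfperm, blockIncr2_iff.2 ⟨?_, ?_⟩⟩
    · intro i j h1 h2 h3
      rw [entfL i (by omega) (by omega), entfL j (by omega) h3]
      exact w1 i j h1 h2 h3
    · intro i j h1 h2 h3
      have hi : i = n + (i - n) := by omega
      have hj : j = n + (j - n) := by omega
      rw [hi, hj, entfR _ (by omega) (by omega), entfR _ (by omega) (by omega)]
      exact srt_ent_strict hb (by omega) (by omega) (by omega)
  obtain ⟨hsh, E1, E2⟩ := right_comp hn hm hr hf hg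
  have hid : w = wcomp f (cat (idW n) g) := by
    apply ent_ext
    · have hp : (wcomp f (cat (idW n) g)).Perm (List.range' 1 (n + m + r)) :=
        ((shuffle3_iff (by omega)).1 hsh).1
      rw [hwlen, perm_length hp]
    · intro i h1 h2
      rw [hwlen] at h2
      rcases le_or_gt i n with hle | hlt
      · rw [E1 i h1 hle, entfL i h1 hle]
      · have hi : i = n + (i - n) := by omega
        rw [hi, E2 _ (by omega) (by omega), entg _ (by omega) (by omega),
          entfR _ (by omega) (by
            have := srt_idx_lt hb (bmem (i - n) (by omega) (by omega)); omega)]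
        exact (srt_ent_idx hb (bmem (i - n) (by omega) (by omega))).symm
  have ex1 : ent f n = ent w n := entfL n (by omega) (le_refl _)
  have ex2 : ∃ p, n < p ∧ p ≤ n + m + r ∧ ent f (n + m + r) = ent w p := by
    have hmem : ent (srt b) (m + r) ∈ b := srt_ent_mem hb (by omega) (by omega)
    obtain ⟨k, hk, hkv⟩ := List.getElem_of_mem hmem
    refine ⟨n + k + 1, by omega, by omega, ?_⟩
    have e : n + m + r = n + (m + r) := by omega
    have e2 : n + k + 1 = n + (k + 1) := by omega
    rw [e, entfR _ (by omega) (le_refl _), e2, ← entb (k + 1) (by omega) (by omega),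
      ent_getElem hk]
    exact hkv.symm
  have ex3 : ∀ p, n < p → p ≤ n + m + r → ent w p ≤ ent f (n + m + r) := by
    intro p h1 h2
    have e : n + m + r = n + (m + r) := by omega
    rw [e, entfR _ (by omega) (le_refl _)]
    have hmem : ent w p ∈ b := by
      have ep : p = n + (p - n) := by omega
      rw [ep]
      exact bmem (p - n) (by omega) (by omega)
    have := srt_ent_last hb hmem (by omega)
    rwa [slen] at this
  exact ⟨f, g, hf, hg, hid, giff, ex1, ex2, ex3⟩

lemma lt_top {w : List ℕ} {T p q : ℕ} (hp : w.Perm (List.range' 1 T))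
    (hq1 : 1 ≤ q) (hq2 : q ≤ T) (hp1 : 1 ≤ p) (hp2 : p ≤ T) (hne : q ≠ p)
    (htop : ent w p = T) : ent w q < ent w p := by
  have h1 := ent_range hp hq1 hq2
  have h2 : ent w q ≠ ent w p := fun h => hne (ent_inj hp hq1 hq2 hp1 hp2 h)
  omega


theorem statement_3' (n m r : ℕ) (hn : 1 ≤ n) (hm : 1 ≤ m) (hr : 1 ≤ r) :
    ({w : List ℕ | ∃ f g, IsShuffle [n + m, r] f ∧ ent f (n + m) < ent f (n + m + r) ∧
          IsShuffle [n, m] g ∧ w = wcomp f (cat g (idW r))} =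
      {w : List ℕ | ∃ f g, IsShuffle [n, m + r] f ∧ ent f n < ent f (n + m + r) ∧
          IsShuffle [m, r] g ∧ ent g m < ent g (m + r) ∧ w = wcomp f (cat (idW n) g)}) ∧
    ({w : List ℕ | ∃ f g, IsShuffle [n + m, r] f ∧ ent f (n + m + r) < ent f (n + m) ∧
          IsShuffle [n, m] g ∧ ent g n < ent g (n + m) ∧ w = wcomp f (cat g (idW r))} =
      {w : List ℕ | ∃ f g, IsShuffle [n, m + r] f ∧ ent f n < ent f (n + m + r) ∧
          IsShuffle [m, r] g ∧ ent g (m + r) < ent g m ∧ w = wcomp f (cat (idW n) g)}) ∧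
    ({w : List ℕ | ∃ f g, IsShuffle [n + m, r] f ∧ ent f (n + m + r) < ent f (n + m) ∧
          IsShuffle [n, m] g ∧ ent g (n + m) < ent g n ∧ w = wcomp f (cat g (idW r))} =
      {w : List ℕ | ∃ f g, IsShuffle [n, m + r] f ∧ ent f (n + m + r) < ent f n ∧
          IsShuffle [m, r] g ∧ w = wcomp f (cat (idW n) g)}) := by
  have eT : n + (m + r) = n + m + r := by omega
  refine ⟨?_, ?_, ?_⟩
  -- Part 1
  · ext w
    simp only [Set.mem_setOf_eq]
    constructor
    · rintro ⟨f, g, hf, hflt, hg, rfl⟩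
      obtain ⟨hsh, E1, E2⟩ := left_comp hn hm hr hf hg
      set W := wcomp f (cat g (idW r)) with hW
      have hpw : W.Perm (List.range' 1 (n + m + r)) := ((shuffle3_iff (by omega)).1 hsh).1
      have hftop : ent f (n + m + r) = n + m + r := (sh2_top (by omega) hr hf).1 hflt
      have P1 : ent W (n + m + r) = n + m + r := by
        rw [E2 (n + m + r) (by omega) (le_refl _), hftop]
      obtain ⟨f', g', hf', hg', hid, giff, e1, ⟨p, hp1, hp2, hp3⟩, hub⟩ :=
        right_decomp hn hm hr hsh
      refine ⟨f', g', hf', ?_, hg', ?_, hid⟩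
      · have ha1 : ent W (n + m + r) ≤ ent f' (n + m + r) := hub _ (by omega) (le_refl _)
        have ha2 : ent W p ≤ n + m + r := (ent_range hpw (by omega) hp2).2
        have ha3 : ent W n < ent W (n + m + r) :=
          lt_top hpw (by omega) (by omega) (by omega) (le_refl _) (by omega) P1
        omega
      · rw [giff m (m + r) (by omega) (by omega) (by omega) (le_refl _), eT]
        exact lt_top hpw (by omega) (by omega) (by omega) (le_refl _) (by omega) P1
    · rintro ⟨f, g, hf, hflt, hg, hglt, rfl⟩
      obtain ⟨hsh, E1, E2⟩ := right_comp hn hm hr hf hg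
      set W := wcomp f (cat (idW n) g) with hW
      have hpw : W.Perm (List.range' 1 (n + m + r)) := ((shuffle3_iff (by omega)).1 hsh).1
      have hgtop : ent g (m + r) = m + r := (sh2_top hm hr hg).1 hglt
      have hftop : ent f (n + (m + r)) = n + (m + r) := by
        refine (sh2_top hn (by omega) hf).1 ?_
        rw [eT]
        exact hflt
      have P1 : ent W (n + m + r) = n + m + r := by
        rw [← eT, E2 (m + r) (by omega) (le_refl _), hgtop, hftop]
      obtain ⟨f', g', hf', hg', hid, giff, e1, ⟨p, hp1, hp2, hp3⟩, hub⟩ :=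
        left_decomp hn hm hr hsh
      refine ⟨f', g', hf', ?_, hg', hid⟩
      have ha3 : ent W p < ent W (n + m + r) :=
        lt_top hpw hp1 (by omega) (by omega) (le_refl _) (by omega) P1
      omega
  -- Part 2
  · ext w
    simp only [Set.mem_setOf_eq]
    constructor
    · rintro ⟨f, g, hf, hflt, hg, hglt, rfl⟩
      obtain ⟨hsh, E1, E2⟩ := left_comp hn hm hr hf hg
      set W := wcomp f (cat g (idW r)) with hW
      have hpw : W.Perm (List.range' 1 (n + m + r)) := ((shuffle3_iff (by omega)).1 hsh).1
      have hgtop : ent g (n + m) = n + m := (sh2_top hn hm hg).1 hglt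
      have hftop : ent f (n + m) = n + m + r := (sh2_top (by omega) hr hf).2 hflt
      have P2 : ent W (n + m) = n + m + r := by
        rw [E1 (n + m) (by omega) (le_refl _), hgtop, hftop]
      obtain ⟨f', g', hf', hg', hid, giff, e1, ⟨p, hp1, hp2, hp3⟩, hub⟩ :=
        right_decomp hn hm hr hsh
      refine ⟨f', g', hf', ?_, hg', ?_, hid⟩
      · have ha1 : ent W (n + m) ≤ ent f' (n + m + r) := hub (n + m) (by omega) (by omega)
        have ha2 : ent W p ≤ n + m + r := (ent_range hpw (by omega) hp2).2
        have ha3 : ent W n < ent W (n + m) :=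
          lt_top hpw (by omega) (by omega) (by omega) (by omega) (by omega) P2
        omega
      · rw [giff (m + r) m (by omega) (le_refl _) (by omega) (by omega), eT]
        exact lt_top hpw (by omega) (le_refl _) (by omega) (by omega) (by omega) P2
    · rintro ⟨f, g, hf, hflt, hg, hglt, rfl⟩
      obtain ⟨hsh, E1, E2⟩ := right_comp hn hm hr hf hg
      set W := wcomp f (cat (idW n) g) with hW
      have hpw : W.Perm (List.range' 1 (n + m + r)) := ((shuffle3_iff (by omega)).1 hsh).1
      have hgtop : ent g m = m + r := (sh2_top hm hr hg).2 hglt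
      have hftop : ent f (n + (m + r)) = n + (m + r) := by
        refine (sh2_top hn (by omega) hf).1 ?_
        rw [eT]
        exact hflt
      have P2 : ent W (n + m) = n + m + r := by
        have hE := E2 m hm (by omega)
        rw [hE, hgtop, hftop, eT]
      obtain ⟨f', g', hf', hg', hid, giff, e1, ⟨p, hp1, hp2, hp3⟩, hub⟩ :=
        left_decomp hn hm hr hsh
      refine ⟨f', g', hf', ?_, hg', ?_, hid⟩
      · have hb1 : ent W (n + m) ≤ ent f' (n + m) := hub (n + m) (by omega) (le_refl _)
        have hb2 : ent W p ≤ n + m + r := (ent_range hpw hp1 (by omega)).2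
        have hb3 : ent W (n + m + r) < ent W (n + m) :=
          lt_top hpw (by omega) (le_refl _) (by omega) (by omega) (by omega) P2
        omega
      · rw [giff n (n + m) (by omega) (by omega) (by omega) (le_refl _)]
        exact lt_top hpw (by omega) (by omega) (by omega) (by omega) (by omega) P2
  -- Part 3
  · ext w
    simp only [Set.mem_setOf_eq]
    constructor
    · rintro ⟨f, g, hf, hflt, hg, hglt, rfl⟩
      obtain ⟨hsh, E1, E2⟩ := left_comp hn hm hr hf hg
      set W := wcomp f (cat g (idW r)) with hW
      have hpw : W.Perm (List.range' 1 (n + m + r)) := ((shuffle3_iff (by omega)).1 hsh).1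
      have hgtop : ent g n = n + m := (sh2_top hn hm hg).2 hglt
      have hftop : ent f (n + m) = n + m + r := (sh2_top (by omega) hr hf).2 hflt
      have P3 : ent W n = n + m + r := by
        rw [E1 n (by omega) (by omega), hgtop, hftop]
      obtain ⟨f', g', hf', hg', hid, giff, e1, ⟨p, hp1, hp2, hp3⟩, hub⟩ :=
        right_decomp hn hm hr hsh
      refine ⟨f', g', hf', ?_, hg', hid⟩
      have hc1 : ent W p < ent W n :=
        lt_top hpw (by omega) (by omega) (by omega) (by omega) (by omega) P3
      omega
    · rintro ⟨f, g, hf, hflt, hg, rfl⟩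
      obtain ⟨hsh, E1, E2⟩ := right_comp hn hm hr hf hg
      set W := wcomp f (cat (idW n) g) with hW
      have hpw : W.Perm (List.range' 1 (n + m + r)) := ((shuffle3_iff (by omega)).1 hsh).1
      have hftop : ent f n = n + (m + r) := by
        refine (sh2_top hn (by omega) hf).2 ?_
        rw [eT]
        exact hflt
      have P3 : ent W n = n + m + r := by
        rw [E1 n (by omega) (le_refl _), hftop, eT]
      obtain ⟨f', g', hf', hg', hid, giff, e1, ⟨p, hp1, hp2, hp3⟩, hub⟩ :=
        left_decomp hn hm hr hsh
      refine ⟨f', g', hf', ?_, hg', ?_, hid⟩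
      · have hb1 : ent W n ≤ ent f' (n + m) := hub n (by omega) (by omega)
        have hb2 : ent W p ≤ n + m + r := (ent_range hpw hp1 (by omega)).2
        have hb3 : ent W (n + m + r) < ent W n :=
          lt_top hpw (by omega) (le_refl _) (by omega) (by omega) (by omega) P3
        omega
      · rw [giff (n + m) n (by omega) (le_refl _) (by omega) (by omega)]
        exact lt_top hpw (by omega) (by omega) (by omega) (by omega) (by omega) P3


/-- the three refined shuffle identities, where `Sh^≻(r,s)` (resp. `Sh^≺(r,s)`)
is the set of `(r,s)`-shuffles `f` with `f(r) < f(r+s)` (resp. `f(r) > f(r+s)`). -/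
theorem statement_3 (n m r : ℕ) (hn : 1 ≤ n) (hm : 1 ≤ m) (hr : 1 ≤ r) :
    ({w : List ℕ | ∃ f g, IsShuffle [n + m, r] f ∧ ent f (n + m) < ent f (n + m + r) ∧
          IsShuffle [n, m] g ∧ w = wcomp f (cat g (idW r))} =
      {w : List ℕ | ∃ f g, IsShuffle [n, m + r] f ∧ ent f n < ent f (n + m + r) ∧
          IsShuffle [m, r] g ∧ ent g m < ent g (m + r) ∧ w = wcomp f (cat (idW n) g)}) ∧
    ({w : List ℕ | ∃ f g, IsShuffle [n + m, r] f ∧ ent f (n + m + r) < ent f (n + m) ∧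
          IsShuffle [n, m] g ∧ ent g n < ent g (n + m) ∧ w = wcomp f (cat g (idW r))} =
      {w : List ℕ | ∃ f g, IsShuffle [n, m + r] f ∧ ent f n < ent f (n + m + r) ∧
          IsShuffle [m, r] g ∧ ent g (m + r) < ent g m ∧ w = wcomp f (cat (idW n) g)}) ∧
    ({w : List ℕ | ∃ f g, IsShuffle [n + m, r] f ∧ ent f (n + m + r) < ent f (n + m) ∧
          IsShuffle [n, m] g ∧ ent g (n + m) < ent g n ∧ w = wcomp f (cat g (idW r))} =
      {w : List ℕ | ∃ f g, IsShuffle [n, m + r] f ∧ ent f (n + m + r) < ent f n ∧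
          IsShuffle [m, r] g ∧ w = wcomp f (cat (idW n) g)}) := by
  exact statement_3' n m r hn hm hr

end SurjPerm
end

section
/- For any composition (n_1,…,n_p) of n, the set of shuffles Sh(n_1,…,n_p) coincides with the interval {w ∈ S_n : 1_n ≤ w ≤ ε(n_1,…,n_p)} for the weak Bruhat order on S_n, where 1_n is the identity permutation. -/
open scoped TensorProduct

namespace SurjPerm

variable (𝕂 : Type) [Field 𝕂]

/-- a word which is a permutation of `{1,…,n}`. -/
def PW (n : ℕ) (w : List ℕ) : Prop := w.length = n ∧ ∀ k, k ∈ w ↔ 1 ≤ k ∧ k ≤ n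

theorem le_rk {w : List ℕ} {k : ℕ} (h : k ∈ w) : k ≤ rk w := by
  induction w with
  | nil => cases h
  | cons a t ih =>
    rcases List.mem_cons.mp h with rfl | h
    · exact le_max_left _ _
    · exact (ih h).trans (le_max_right _ _)

theorem rk_le {w : List ℕ} {n : ℕ} (h : ∀ k ∈ w, k ≤ n) : rk w ≤ n := by
  induction w with
  | nil => exact Nat.zero_le n
  | cons a t ih =>
    exact max_le (h a List.mem_cons_self) (ih fun k hk => h k (List.mem_cons_of_mem a hk))

theorem PW.rk_eq {n : ℕ} {w : List ℕ} (h : PW n w) : rk w = n := by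
  rcases Nat.eq_zero_or_pos n with hn | hn
  · subst hn
    have : w = [] := List.length_eq_zero_iff.mp h.1
    simp [this, rk]
  · refine le_antisymm (rk_le fun k hk => ((h.2 k).mp hk).2) ?_
    exact le_rk ((h.2 n).mpr ⟨hn, le_rfl⟩)

theorem PW.nodup {n : ℕ} {w : List ℕ} (h : PW n w) : w.Nodup := by
  have htf : w.toFinset = Finset.Icc 1 n := by
    ext k; simp [h.2 k]
  have hd : w.dedup.length = n := by
    have := List.card_toFinset w
    rw [htf] at this
    simpa using this.symm
  have : w.dedup = w := (List.dedup_sublist w).eq_of_length (by rw [hd, h.1])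
  rw [← this]; exact List.nodup_dedup w

theorem PW.val_mem {n : ℕ} {w : List ℕ} (h : PW n w) {p : ℕ} (hp : p < n) :
    1 ≤ w.getD p 0 ∧ w.getD p 0 ≤ n := by
  have hp' : p < w.length := by rw [h.1]; exact hp
  rw [List.getD_eq_getElem _ _ hp']
  exact (h.2 _).mp (List.getElem_mem hp')

theorem PW.val_inj {n : ℕ} {w : List ℕ} (h : PW n w) {p q : ℕ} (hp : p < n) (hq : q < n)
    (he : w.getD p 0 = w.getD q 0) : p = q := by
  have hp' : p < w.length := by rw [h.1]; exact hp
  have hq' : q < w.length := by rw [h.1]; exact hq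
  rw [List.getD_eq_getElem _ _ hp', List.getD_eq_getElem _ _ hq'] at he
  exact (List.Nodup.getElem_inj_iff h.nodup).mp he

theorem memST_iff_PW {n : ℕ} {w : List ℕ} (hn : 1 ≤ n) : memST w n n ↔ PW n w := by
  constructor
  · rintro ⟨⟨hne, hmem⟩, hlen, hrk⟩
    exact ⟨hlen, by simpa [hrk] using hmem⟩
  · intro h
    have hrk := h.rk_eq
    have hne : w ≠ [] := by
      intro he; have hl := h.1; rw [he] at hl; simp at hl; omega
    exact ⟨⟨hne, by simpa [hrk] using h.2⟩, h.1, hrk⟩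

/-- the set of (positional) inversions of a word. -/
def InvF (w : List ℕ) : Finset (ℕ × ℕ) :=
  (Finset.range w.length ×ˢ Finset.range w.length).filter fun pq =>
    pq.1 < pq.2 ∧ w.getD pq.2 0 < w.getD pq.1 0

theorem mem_InvF {w : List ℕ} {p q : ℕ} :
    (p, q) ∈ InvF w ↔ q < w.length ∧ p < q ∧ w.getD q 0 < w.getD p 0 := by
  unfold InvF
  simp only [Finset.mem_filter, Finset.mem_product, Finset.mem_range]
  constructor
  · rintro ⟨⟨_, hq⟩, h⟩; exact ⟨hq, h⟩
  · rintro ⟨hq, hpq, hv⟩; exact ⟨⟨lt_trans hpq hq, hq⟩, hpq, hv⟩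

theorem swapVal_getD {i : ℕ} {w : List ℕ} {p : ℕ} (hp : p < w.length) :
    (swapVal i w).getD p 0 =
      (fun v => if v = i then i + 1 else if v = i + 1 then i else v) (w.getD p 0) := by
  unfold swapVal
  rw [List.getD_eq_getElem _ _ (by simpa using hp), List.getD_eq_getElem _ _ hp,
    List.getElem_map]

theorem swapVal_length (i : ℕ) (w : List ℕ) : (swapVal i w).length = w.length := by
  simp [swapVal]

theorem wBCov.invF_subset {f g : List ℕ} (h : wBCov f g) : InvF f ⊆ InvF g := by
  obtain ⟨i, _, _, rfl, hpos⟩ := h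
  rintro ⟨p, q⟩ hm
  rw [mem_InvF] at hm
  obtain ⟨hq, hpq, hv⟩ := hm
  have hp : p < f.length := lt_trans hpq hq
  rw [mem_InvF, swapVal_length, swapVal_getD hq, swapVal_getD hp]
  refine ⟨hq, hpq, ?_⟩
  have hne : ¬ (f.getD q 0 = i ∧ f.getD p 0 = i + 1) := by
    rintro ⟨h1, h2⟩
    exact absurd (hpos q p hq hp h1 h2) (by omega)
  simp only
  split_ifs <;> omega

theorem wBle.invF_subset {f g : List ℕ} (h : wBle f g) : InvF f ⊆ InvF g := by
  induction h with
  | refl => exact subset_rfl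
  | tail _ h2 ih => exact ih.trans h2.invF_subset

theorem PW.swapVal {n : ℕ} {w : List ℕ} (h : PW n w) {i : ℕ} (hi : 1 ≤ i) (hi2 : i + 1 ≤ n) :
    PW n (SurjPerm.swapVal i w) := by
  constructor
  · rw [swapVal_length, h.1]
  · intro k
    unfold SurjPerm.swapVal
    simp only [List.mem_map]
    constructor
    · rintro ⟨v, hv, rfl⟩
      have := (h.2 v).mp hv
      split_ifs <;> omega
    · intro hk
      refine ⟨if k = i then i + 1 else if k = i + 1 then i else k, ?_, ?_⟩
      · apply (h.2 _).mpr; split_ifs <;> omega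
      · split_ifs <;> omega

/-- key step: turning an adjacent-values non-inversion into a cover. -/
theorem cover_step {n : ℕ} {w : List ℕ} (h : PW n w) {p q : ℕ} (hpq : p < q) (hq : q < n)
    (hadj : w.getD q 0 = w.getD p 0 + 1) :
    wBCov w (swapVal (w.getD p 0) w) ∧ PW n (swapVal (w.getD p 0) w) ∧
      (p, q) ∈ InvF (swapVal (w.getD p 0) w) ∧
      InvF (swapVal (w.getD p 0) w) ⊆ insert (p, q) (InvF w) := by
  set i := w.getD p 0 with hi
  have hp : p < n := lt_trans hpq hq
  have hi1 : 1 ≤ i := (h.val_mem hp).1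
  have hi2 : i + 1 ≤ n := by have := (h.val_mem hq).2; omega
  have hlen : w.length = n := h.1
  have hposi : ∀ a, a < w.length → w.getD a 0 = i → a = p := fun a ha hv =>
    h.val_inj (by omega) hp hv
  have hposi1 : ∀ a, a < w.length → w.getD a 0 = i + 1 → a = q := fun a ha hv =>
    h.val_inj (by omega) hq (by omega)
  have hcov : wBCov w (swapVal i w) := by
    refine ⟨i, hi1, by rw [h.rk_eq]; exact hi2, rfl, fun a b ha hb hva hvb => ?_⟩
    rw [hposi a ha hva, hposi1 b hb hvb]; exact hpq
  refine ⟨hcov, h.swapVal hi1 hi2, ?_, ?_⟩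
  · rw [mem_InvF, swapVal_length, hlen, swapVal_getD (by omega : q < w.length),
      swapVal_getD (by omega : p < w.length)]
    refine ⟨hq, hpq, ?_⟩
    simp only [hadj, ← hi]
    split_ifs <;> omega
  · rintro ⟨a, b⟩ hm
    rw [mem_InvF, swapVal_length] at hm
    obtain ⟨hb, hab, hv⟩ := hm
    have ha : a < w.length := lt_trans hab hb
    rw [swapVal_getD hb, swapVal_getD ha] at hv
    simp only at hv
    by_cases hcase : w.getD b 0 = i + 1 ∧ w.getD a 0 = i
    · have hap : a = p := hposi a ha hcase.2
      have hbq : b = q := hposi1 b hb hcase.1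
      simp [hap, hbq]
    · refine Finset.mem_insert_of_mem (mem_InvF.mpr ⟨hb, hab, ?_⟩)
      revert hv
      split_ifs <;> omega

theorem PW.count_lt {n : ℕ} {w : List ℕ} (h : PW n w) {c : ℕ} (hc1 : 1 ≤ c) (hcn : c ≤ n) :
    ((Finset.range n).filter fun q => w.getD q 0 < c).card = c - 1 := by
  have hcard : (Finset.range (c - 1)).card = c - 1 := Finset.card_range _
  rw [← hcard]
  apply Finset.card_bij' (fun q _ => w.getD q 0 - 1) (fun v _ => w.idxOf (v + 1))
  · intro q hq
    rw [Finset.mem_filter, Finset.mem_range] at hq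
    have h1 := (h.val_mem hq.1).1
    rw [Finset.mem_range]
    omega
  · intro v hv
    rw [Finset.mem_range] at hv
    have hmem : v + 1 ∈ w := (h.2 (v + 1)).mpr ⟨by omega, by omega⟩
    have hidx : w.idxOf (v + 1) < w.length := List.idxOf_lt_length_iff.mpr hmem
    have hval : w.getD (w.idxOf (v + 1)) 0 = v + 1 := by
      rw [List.getD_eq_getElem _ _ hidx, List.getElem_idxOf hidx]
    rw [Finset.mem_filter, Finset.mem_range]
    refine ⟨by rw [← h.1]; exact hidx, by omega⟩
  · intro q hq
    rw [Finset.mem_filter, Finset.mem_range] at hq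
    have h1 := (h.val_mem hq.1).1
    have hsucc : w.getD q 0 - 1 + 1 = w.getD q 0 := by omega
    rw [hsucc]
    have hmem : w.getD q 0 ∈ w := by
      rw [List.getD_eq_getElem _ _ (by rw [h.1]; exact hq.1)]
      exact List.getElem_mem _
    have hidx : w.idxOf (w.getD q 0) < w.length := List.idxOf_lt_length_iff.mpr hmem
    have hval : w.getD (w.idxOf (w.getD q 0)) 0 = w.getD q 0 := by
      rw [List.getD_eq_getElem _ _ hidx, List.getElem_idxOf hidx]
    exact h.val_inj (by rw [← h.1]; exact hidx) hq.1 hval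
  · intro v hv
    rw [Finset.mem_range] at hv
    have hmem : v + 1 ∈ w := (h.2 (v + 1)).mpr ⟨by omega, by omega⟩
    have hidx : w.idxOf (v + 1) < w.length := List.idxOf_lt_length_iff.mpr hmem
    have hval : w.getD (w.idxOf (v + 1)) 0 = v + 1 := by
      rw [List.getD_eq_getElem _ _ hidx, List.getElem_idxOf hidx]
    omega

/-- the number determining the value at position `p` from the inversion set alone. -/
def dCount (n p : ℕ) (I : Finset (ℕ × ℕ)) : ℕ :=
  ((Finset.range n).filter fun q => (q < p ∧ (q, p) ∉ I) ∨ (p < q ∧ (p, q) ∈ I)).card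

theorem PW.val_eq_dCount {n : ℕ} {w : List ℕ} (h : PW n w) {p : ℕ} (hp : p < n) :
    w.getD p 0 = dCount n p (InvF w) + 1 := by
  obtain ⟨h1, h2⟩ := h.val_mem hp
  have hfe : ((Finset.range n).filter fun q => (q < p ∧ (q, p) ∉ InvF w) ∨
      (p < q ∧ (p, q) ∈ InvF w)) = (Finset.range n).filter fun q => w.getD q 0 < w.getD p 0 := by
    apply Finset.filter_congr
    intro q hq
    rw [Finset.mem_range] at hq
    have hplen : p < w.length := by rw [h.1]; exact hp
    have hqlen : q < w.length := by rw [h.1]; exact hq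
    simp only [mem_InvF, eq_iff_iff]
    rcases lt_trichotomy q p with hc | hc | hc
    · have hne : w.getD q 0 ≠ w.getD p 0 := fun he => absurd (h.val_inj hq hp he) (by omega)
      constructor
      · rintro (⟨_, hni⟩ | ⟨hcon, _⟩)
        · by_contra hnot
          exact hni ⟨hplen, hc, by omega⟩
        · omega
      · intro hlt
        exact Or.inl ⟨hc, fun hm => by omega⟩
    · subst hc
      constructor
      · rintro (⟨hcon, _⟩ | ⟨hcon, _⟩) <;> omega
      · intro hlt; omega
    · have hne : w.getD q 0 ≠ w.getD p 0 := fun he => absurd (h.val_inj hq hp he) (by omega)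
      constructor
      · rintro (⟨hcon, _⟩ | ⟨_, _, _, hlt⟩)
        · omega
        · exact hlt
      · intro hlt
        exact Or.inr ⟨hc, hqlen, hc, hlt⟩
  unfold dCount
  rw [hfe, h.count_lt h1 h2]
  omega

theorem PW.eq_of_invF {n : ℕ} {w v : List ℕ} (hw : PW n w) (hv : PW n v)
    (hI : InvF w = InvF v) : w = v := by
  apply List.ext_getElem (by rw [hw.1, hv.1])
  intro p h1 h2
  have hp : p < n := by rw [← hw.1]; exact h1
  have := hw.val_eq_dCount hp
  rw [hI, ← hv.val_eq_dCount hp] at this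
  rw [← List.getD_eq_getElem w 0 h1, ← List.getD_eq_getElem v 0 h2, this]

theorem wBle_of_invF_subset {n : ℕ} {v : List ℕ} (hv : PW n v) :
    ∀ m (w : List ℕ), PW n w → InvF w ⊆ InvF v → (InvF v \ InvF w).card = m → wBle w v := by
  intro m
  induction m using Nat.strong_induction_on with
  | _ m ih =>
    intro w hw hsub hcard
    rcases Nat.eq_zero_or_pos m with rfl | hm
    · have hemp : InvF v \ InvF w = ∅ := Finset.card_eq_zero.mp hcard
      have heq : InvF w = InvF v :=
        Finset.Subset.antisymm hsub (Finset.sdiff_eq_empty_iff_subset.mp hemp)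
      rw [hw.eq_of_invF hv heq]
      exact Relation.ReflTransGen.refl
    · have hne : (InvF v \ InvF w).Nonempty := Finset.card_pos.mp (by omega)
      obtain ⟨⟨p, q⟩, hmem, hmin⟩ :=
        Finset.exists_min_image _ (fun pq => w.getD pq.2 0 - w.getD pq.1 0) hne
      rw [Finset.mem_sdiff] at hmem
      obtain ⟨hInv_v, hnw⟩ := hmem
      obtain ⟨hq_len, hpq_lt, hv_val⟩ := mem_InvF.mp hInv_v
      have hq_n : q < n := by rw [← hv.1]; exact hq_len
      have hp_n : p < n := lt_trans hpq_lt hq_n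
      have hwlen : w.length = n := hw.1
      have hw_lt : w.getD p 0 < w.getD q 0 := by
        have h1 : ¬ w.getD q 0 < w.getD p 0 := fun hlt =>
          hnw (mem_InvF.mpr ⟨by omega, hpq_lt, hlt⟩)
        have h2 : w.getD p 0 ≠ w.getD q 0 := fun he =>
          absurd (hw.val_inj hp_n hq_n he) (by omega)
        omega
      have hadj : w.getD q 0 = w.getD p 0 + 1 := by
        by_contra hne2
        have hwq2 : w.getD p 0 + 2 ≤ w.getD q 0 := by omega
        have hmemw : w.getD p 0 + 1 ∈ w :=
          (hw.2 _).mpr ⟨by omega, by have := (hw.val_mem hq_n).2; omega⟩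
        obtain ⟨t, ht_len, ht_val⟩ := List.mem_iff_getElem.mp hmemw
        have ht_n : t < n := by omega
        have htD : w.getD t 0 = w.getD p 0 + 1 := by
          rw [List.getD_eq_getElem _ _ ht_len, ht_val]
        rcases lt_trichotomy t p with h1 | h1 | h1
        · have htp_w : (t, p) ∈ InvF w := mem_InvF.mpr ⟨by omega, h1, by omega⟩
          have hvp := (mem_InvF.mp (hsub htp_w)).2.2
          have htq_v : (t, q) ∈ InvF v :=
            mem_InvF.mpr ⟨hq_len, lt_trans h1 hpq_lt, by omega⟩
          have htq_nw : (t, q) ∉ InvF w := fun hmm => by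
            have := (mem_InvF.mp hmm).2.2; omega
          have : w.getD q 0 - w.getD p 0 ≤ w.getD q 0 - w.getD t 0 :=
            hmin (t, q) (Finset.mem_sdiff.mpr ⟨htq_v, htq_nw⟩)
          omega
        · rw [h1] at htD; omega
        · rcases lt_trichotomy t q with h2 | h2 | h2
          · by_cases hc : (p, t) ∈ InvF v
            · have hpt_nw : (p, t) ∉ InvF w := fun hmm => by
                have := (mem_InvF.mp hmm).2.2; omega
              have : w.getD q 0 - w.getD p 0 ≤ w.getD t 0 - w.getD p 0 :=
                hmin (p, t) (Finset.mem_sdiff.mpr ⟨hc, hpt_nw⟩)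
              omega
            · have hvne : v.getD t 0 ≠ v.getD p 0 := fun he =>
                absurd (hv.val_inj ht_n hp_n he) (by omega)
              have hvt : v.getD p 0 < v.getD t 0 := by
                have : ¬ v.getD t 0 < v.getD p 0 := fun hlt =>
                  hc (mem_InvF.mpr ⟨by rw [hv.1]; exact ht_n, h1, hlt⟩)
                omega
              have htq_v : (t, q) ∈ InvF v := mem_InvF.mpr ⟨hq_len, h2, by omega⟩
              have htq_nw : (t, q) ∉ InvF w := fun hmm => by
                have := (mem_InvF.mp hmm).2.2; omega
              have : w.getD q 0 - w.getD p 0 ≤ w.getD q 0 - w.getD t 0 :=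
                hmin (t, q) (Finset.mem_sdiff.mpr ⟨htq_v, htq_nw⟩)
              omega
          · rw [h2] at htD; omega
          · have hqt_w : (q, t) ∈ InvF w := mem_InvF.mpr ⟨by omega, h2, by omega⟩
            have hvt := (mem_InvF.mp (hsub hqt_w)).2.2
            have hpt_v : (p, t) ∈ InvF v :=
              mem_InvF.mpr ⟨by rw [hv.1]; exact ht_n, lt_trans hpq_lt h2, by omega⟩
            have hpt_nw : (p, t) ∉ InvF w := fun hmm => by
              have := (mem_InvF.mp hmm).2.2; omega
            have : w.getD q 0 - w.getD p 0 ≤ w.getD t 0 - w.getD p 0 :=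
              hmin (p, t) (Finset.mem_sdiff.mpr ⟨hpt_v, hpt_nw⟩)
            omega
      obtain ⟨hcov, hgPW, hg_mem, hg_sub⟩ := cover_step hw hpq_lt hq_n hadj
      set g := swapVal (w.getD p 0) w with hg
      have hg_sub_v : InvF g ⊆ InvF v := by
        intro x hx
        rcases Finset.mem_insert.mp (hg_sub hx) with rfl | hx'
        · exact hInv_v
        · exact hsub hx'
      have hw_sub_g : InvF w ⊆ InvF g := hcov.invF_subset
      have hss : InvF v \ InvF g ⊂ InvF v \ InvF w := by
        rw [Finset.ssubset_iff_of_subset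
          (fun x hx => by
            rw [Finset.mem_sdiff] at *
            exact ⟨hx.1, fun hxw => hx.2 (hw_sub_g hxw)⟩)]
        exact ⟨(p, q), Finset.mem_sdiff.mpr ⟨hInv_v, hnw⟩,
          fun hmm => (Finset.mem_sdiff.mp hmm).2 hg_mem⟩
      have hcard' := Finset.card_lt_card hss
      exact Relation.ReflTransGen.head hcov
        (ih _ (by omega) g hgPW hg_sub_v rfl)

theorem sum_take_mono {ns : List ℕ} {k k' : ℕ} (h : k ≤ k') :
    (ns.take k).sum ≤ (ns.take k').sum := by
  have : ns.take k' = ns.take k ++ (ns.drop k).take (k' - k) := by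
    rw [← List.take_add]
    congr 1
    omega
  rw [this, List.sum_append]
  omega

theorem sum_drop_mono {ns : List ℕ} {k k' : ℕ} (h : k ≤ k') :
    (ns.drop k').sum ≤ (ns.drop k).sum := by
  have : ns.drop k' = (ns.drop k).drop (k' - k) := by
    rw [List.drop_drop]
    congr 1
    omega
  rw [this]
  have := List.sum_take_add_sum_drop (ns.drop k) (k' - k)
  omega

theorem exists_block {ns : List ℕ} {p : ℕ} (hp : p < ns.sum) :
    ∃ k, k < ns.length ∧ (ns.take k).sum ≤ p ∧ p < (ns.take (k + 1)).sum := by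
  induction ns generalizing p with
  | nil => simp at hp
  | cons a t ih =>
    by_cases hpa : p < a
    · exact ⟨0, by simp, by simp, by simpa using hpa⟩
    · have hp' : p - a < t.sum := by simp at hp; omega
      obtain ⟨k, hk, h1, h2⟩ := ih hp'
      exact ⟨k + 1, by simpa using hk, by simp; omega, by simp; omega⟩

theorem epsW_length (rs : List ℕ) : (epsW rs).length = rs.sum := by
  induction rs with
  | nil => rfl
  | cons r t ih => simp [epsW, ih]

theorem epsW_mem (rs : List ℕ) (k : ℕ) : k ∈ epsW rs ↔ 1 ≤ k ∧ k ≤ rs.sum := by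
  induction rs with
  | nil => simp [epsW]; omega
  | cons r t ih =>
    simp only [epsW, List.mem_append, List.mem_map, List.mem_range, ih, List.sum_cons]
    constructor
    · rintro (⟨p, hp, rfl⟩ | ⟨h1, h2⟩) <;> omega
    · intro ⟨h1, h2⟩
      by_cases hc : k ≤ t.sum
      · exact Or.inr ⟨h1, hc⟩
      · exact Or.inl ⟨k - t.sum - 1, by omega, by omega⟩

theorem epsW_PW (rs : List ℕ) : PW rs.sum (epsW rs) := ⟨epsW_length rs, epsW_mem rs⟩

theorem epsW_getD {rs : List ℕ} {k p : ℕ} (hk : k < rs.length)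
    (h1 : (rs.take k).sum ≤ p) (h2 : p < (rs.take (k + 1)).sum) :
    (epsW rs).getD p 0 = (rs.drop (k + 1)).sum + (p - (rs.take k).sum) + 1 := by
  induction rs generalizing k p with
  | nil => simp at hk
  | cons r t ih =>
    cases k with
    | zero =>
      simp only [List.take_zero, List.sum_nil, List.take_succ_cons, List.take_zero,
        List.sum_cons] at h1 h2 ⊢
      have hpr : p < r := by simpa using h2
      unfold epsW
      rw [List.getD_append _ _ _ _ (by simpa using hpr)]
      rw [List.getD_eq_getElem _ _ (by simpa using hpr), List.getElem_map]
      simp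
      omega
    | succ k =>
      have hk' : k < t.length := by simpa using hk
      simp only [List.take_succ_cons, List.sum_cons] at h1 h2
      have hpr : r ≤ p := by omega
      unfold epsW
      rw [List.getD_append_right _ _ _ _ (by simpa using hpr)]
      have hlen : ((List.range r).map (· + t.sum + 1)).length = r := by simp
      rw [hlen]
      rw [ih hk' (by omega) (by omega)]
      simp only [List.drop_succ_cons, List.take_succ_cons, List.sum_cons]
      omega

theorem epsW_same {ns : List ℕ} {k a b : ℕ} (hk : k < ns.length)
    (ha1 : (ns.take k).sum ≤ a) (hab : a < b) (hb2 : b < (ns.take (k + 1)).sum) :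
    (epsW ns).getD a 0 < (epsW ns).getD b 0 := by
  rw [epsW_getD hk ha1 (by omega), epsW_getD hk (by omega) hb2]
  omega

theorem epsW_cross {ns : List ℕ} {k k' a b : ℕ} (hk' : k' < ns.length) (hkk' : k < k')
    (ha1 : (ns.take k).sum ≤ a) (ha2 : a < (ns.take (k + 1)).sum)
    (hb1 : (ns.take k').sum ≤ b) (hb2 : b < (ns.take (k' + 1)).sum) :
    (epsW ns).getD b 0 < (epsW ns).getD a 0 := by
  have hk : k < ns.length := lt_trans hkk' hk'
  rw [epsW_getD hk ha1 ha2, epsW_getD hk' hb1 hb2]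
  have hsucc : (ns.take (k' + 1)).sum = (ns.take k').sum + ns[k'] :=
    List.sum_take_succ _ _ hk'
  have hdrop : (ns.drop k').sum = ns[k'] + (ns.drop (k' + 1)).sum := by
    conv_lhs => rw [List.drop_eq_getElem_cons hk']
    rw [List.sum_cons]
  have hmono : (ns.drop k').sum ≤ (ns.drop (k + 1)).sum := sum_drop_mono (by omega)
  omega

theorem idW_getD {n p : ℕ} (hp : p < n) : (idW n).getD p 0 = p + 1 := by
  unfold idW
  rw [List.getD_eq_getElem _ _ (by simpa using hp), List.getElem_map]
  simp

theorem idW_PW (n : ℕ) : PW n (idW n) := by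
  refine ⟨by simp [idW], fun k => ?_⟩
  unfold idW
  simp only [List.mem_map, List.mem_range]
  constructor
  · rintro ⟨p, hp, rfl⟩; omega
  · intro h; exact ⟨k - 1, by omega, by omega⟩

theorem InvF_idW (n : ℕ) : InvF (idW n) = ∅ := by
  ext x
  obtain ⟨p, q⟩ := x
  simp only [mem_InvF, Finset.notMem_empty, iff_false]
  rintro ⟨hq, hpq, hv⟩
  have hqn : q < n := by simpa [idW] using hq
  rw [idW_getD hqn, idW_getD (by omega)] at hv
  omega

theorem shuffle_inv_subset {ns w : List ℕ} (hpw : PW ns.sum w) (hbi : blockIncr ns w) :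
    InvF w ⊆ InvF (epsW ns) := by
  rintro ⟨a, b⟩ hm
  rw [mem_InvF] at hm
  obtain ⟨hb, hab, hv⟩ := hm
  have hbn : b < ns.sum := by rw [← hpw.1]; exact hb
  have han : a < ns.sum := by omega
  obtain ⟨ka, hka, ha1, ha2⟩ := exists_block han
  obtain ⟨kb, hkb, hb1, hb2⟩ := exists_block hbn
  have hnotsame : ¬ b < (ns.take (ka + 1)).sum := by
    intro hc
    have := hbi ka hka (a + 1) (b + 1) (by omega) (by omega) (by omega)
    simp only [ent, Nat.add_sub_cancel] at this
    omega
  have hklt : ka < kb := by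
    by_contra hc
    have := sum_take_mono (show kb + 1 ≤ ka + 1 by omega) (ns := ns)
    omega
  rw [mem_InvF]
  refine ⟨by rw [epsW_length]; exact hbn, hab, ?_⟩
  exact epsW_cross hkb hklt ha1 ha2 hb1 hb2

theorem noninv_blockIncr {ns w : List ℕ} (hpw : PW ns.sum w)
    (hsub : InvF w ⊆ InvF (epsW ns)) : blockIncr ns w := by
  intro k hk i j h1 h2 h3
  set a := i - 1 with ha
  set b := j - 1 with hb
  have hi1 : 1 ≤ i := by have : 0 ≤ (ns.take k).sum := Nat.zero_le _; omega
  have hbn : b < ns.sum := by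
    have := sum_take_mono (show k + 1 ≤ ns.length from hk) (ns := ns)
    rw [List.take_length] at this
    omega
  have han : a < ns.sum := by omega
  have hent : ent w i = w.getD a 0 ∧ ent w j = w.getD b 0 := ⟨rfl, rfl⟩
  rw [hent.1, hent.2]
  have hne : w.getD a 0 ≠ w.getD b 0 := fun he => absurd (hpw.val_inj han hbn he) (by omega)
  by_contra hc
  have hinv : (a, b) ∈ InvF w := mem_InvF.mpr ⟨by rw [hpw.1]; exact hbn, by omega, by omega⟩
  have := mem_InvF.mp (hsub hinv) |>.2.2
  have := epsW_same hk (show (ns.take k).sum ≤ a by omega) (show a < b by omega)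
    (show b < (ns.take (k + 1)).sum by omega)
  omega


/-- for any composition `(n₁,…,n_p)` of `n`, the shuffles `Sh(n₁,…,n_p)` form the
interval `{w ∈ S_n : 1_n ≤ w ≤ ε(n₁,…,n_p)}` for the weak Bruhat order. -/
theorem statement_4 (ns : List ℕ) (hne : ns ≠ []) (hpos : ∀ k ∈ ns, 1 ≤ k) :
    {w : List ℕ | IsShuffle ns w} =
      {w : List ℕ | memST w ns.sum ns.sum ∧ wBle (idW ns.sum) w ∧ wBle w (epsW ns)} := by
  have hn : 1 ≤ ns.sum := by
    by_contra hc
    have h0 : ns.sum = 0 := by omega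
    rw [List.sum_eq_zero_iff] at h0
    obtain ⟨x, hx⟩ := List.exists_mem_of_ne_nil ns hne
    have := hpos x hx
    have := h0 x hx
    omega
  ext w
  simp only [Set.mem_setOf_eq]
  constructor
  · rintro ⟨⟨hST, hlen, hbi⟩, hrk⟩
    have hpw : PW ns.sum w := (memST_iff_PW hn).mp ⟨hST, hlen, hrk⟩
    refine ⟨⟨hST, hlen, hrk⟩, ?_, ?_⟩
    · exact wBle_of_invF_subset hpw _ (idW ns.sum) (idW_PW ns.sum)
        (by rw [InvF_idW]; exact Finset.empty_subset _) rfl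
    · exact wBle_of_invF_subset (epsW_PW ns) _ w hpw (shuffle_inv_subset hpw hbi) rfl
  · rintro ⟨hmem, _, hle⟩
    have hpw : PW ns.sum w := (memST_iff_PW hn).mp hmem
    exact ⟨⟨hmem.1, hmem.2.1, noninv_blockIncr hpw hle.invF_subset⟩, hmem.2.2⟩


end SurjPerm
end
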